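/- Let φ: Γ → B be a strong formal subdivision of rank 0 with Γ lower Eulerian and B Eulerian of rank n, and let x_0, …, x_N list B with weakly increasing ranks, with intermediate posets B_i and intermediate maps φ_i. Then for 0 < i < N, ℓ^Υ_{Γ_{x_i}} · Υ_{[x_i, 1̂)} = Σ_{C a chain of ∂B_i containing some element of φ_i^{-1}(x_i)} u_{ρ(C)} − Σ_{C a chain of ∂B_{i−1} containing x_i} u_{ρ(C)}, where ℓ^Υ denotes the local flag enumerator and [x_i, 1̂) is the half-open interval in B. -/

import Mathlib

open scoped Classical

noncomputable section

namespace CDIndex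

variable {α β : Type}

/-- The natural rank function of a graded poset: `rho x` is one less than the largest
cardinality of a chain contained in `Set.Iic x` (i.e. the length of a maximal chain of
the interval `[0̂, x]`). -/
def rho [PartialOrder α] (x : α) : ℕ :=
  sSup {k : ℕ | ∃ s : Finset α,
    IsChain (· ≤ ·) (s : Set α) ∧ (s : Set α) ⊆ Set.Iic x ∧ s.card = k + 1}

/-- A subset `S` of a poset is graded of rank `n` if every maximal chain of `S`
has exactly `n + 1` elements (i.e. length `n`). -/
def IsGradedSetOfRank [PartialOrder α] (S : Set α) (n : ℕ) : Prop :=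
  ∀ s : Finset α, (s : Set α) ⊆ S → IsChain (· ≤ ·) (s : Set α) →
    (∀ t : Finset α, (t : Set α) ⊆ S → IsChain (· ≤ ·) (t : Set α) → s ⊆ t → s = t) →
    s.card = n + 1

/-- A poset is graded of rank `n` if every maximal chain has length `n`. -/
def IsGradedOfRank (α : Type) [PartialOrder α] (n : ℕ) : Prop :=
  IsGradedSetOfRank (Set.univ : Set α) n

/-- Every interval `[s, t]` with `s < t`, `s, t ∈ S`, has equally many elements of even
rank and of odd rank. -/
def BalancedIntervalsIn [PartialOrder α] (S : Set α) : Prop :=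
  ∀ s ∈ S, ∀ t ∈ S, s < t →
    {y ∈ Set.Icc s t | Even (rho y)}.ncard = {y ∈ Set.Icc s t | Odd (rho y)}.ncard

/-- An Eulerian poset of rank `n`: a graded poset with `0̂` and `1̂` in which every
interval of positive length has equally many elements of each parity of rank. -/
def IsEulerianOfRank (α : Type) [PartialOrder α] (n : ℕ) : Prop :=
  (∃ b : α, ∀ z, b ≤ z) ∧ (∃ t : α, ∀ z, z ≤ t) ∧
    IsGradedOfRank α n ∧ BalancedIntervalsIn (Set.univ : Set α)

/-- A lower Eulerian poset of rank `n`: a graded poset with `0̂` all of whose intervals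
are Eulerian. -/
def IsLowerEulerianOfRank (α : Type) [PartialOrder α] (n : ℕ) : Prop :=
  (∃ b : α, ∀ z, b ≤ z) ∧ IsGradedOfRank α n ∧ BalancedIntervalsIn (Set.univ : Set α)

/-- A lower order ideal `S` (of a poset) which is lower Eulerian of rank `n`. -/
def IsLowerEulerianSetOfRank [PartialOrder α] (S : Set α) (n : ℕ) : Prop :=
  IsGradedSetOfRank S n ∧ BalancedIntervalsIn S

/-- The boundary of (a lower order ideal `S` of) a graded poset of rank `n`: the lower
order ideal generated by the rank `n - 1` elements which are covered by exactly one
element. -/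
def boundaryIn [PartialOrder α] (S : Set α) (n : ℕ) : Set α :=
  {y | y ∈ S ∧ ∃ x ∈ S, rho x = n - 1 ∧ {z ∈ S | x ⋖ z}.ncard = 1 ∧ y ≤ x}

/-- The boundary `∂P` of a graded poset of rank `n`. -/
def boundary (α : Type) [PartialOrder α] (n : ℕ) : Set α :=
  boundaryIn (Set.univ : Set α) n

/-- `α` is a near-Eulerian poset of rank `n`: it is obtained from an Eulerian poset `Q`
of rank `n + 1` by removing the maximal element and one element `q` of rank `n`. -/
def IsNearEulerianOfRank (α : Type) [PartialOrder α] [Finite α] (n : ℕ) : Prop :=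
  ∃ (Q : Type) (_ : PartialOrder Q) (_ : Finite Q) (q top : Q),
    IsEulerianOfRank Q (n + 1) ∧ (∀ z, z ≤ top) ∧ rho q = n ∧ q ≠ top ∧
    Nonempty (α ≃o {x : Q // x ≠ q ∧ x ≠ top})

/-- `α` is (isomorphic to) the boundary of an Eulerian poset, where `α` has rank `n`
(so the Eulerian poset has rank `n + 1`). -/
def IsBoundaryOfEulerianOfRank (α : Type) [PartialOrder α] [Finite α] (n : ℕ) : Prop :=
  ∃ (Q : Type) (_ : PartialOrder Q) (_ : Finite Q) (top : Q),
    IsEulerianOfRank Q (n + 1) ∧ (∀ z, z ≤ top) ∧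
    Nonempty (α ≃o {x : Q // x ≠ top})

/-! ### Strong formal subdivisions -/

/-- A strong formal subdivision (of rank `0`, with the natural rank functions): an
order-preserving, rank-increasing, surjective map which is strongly surjective and
satisfies the alternating-sum condition on fibers. -/
def IsSFS {α β : Type} [PartialOrder α] [PartialOrder β] (φ : α → β) : Prop :=
  Monotone φ ∧ (∀ y, rho y ≤ rho (φ y)) ∧ Function.Surjective φ ∧
  (∀ y x, φ y ≤ x → ∃ y', y ≤ y' ∧ φ y' = x ∧ rho y' = rho x) ∧
  (∀ y x, φ y ≤ x →
    (∑ᶠ y' ∈ {y' | φ y' = x ∧ y ≤ y'}, ((-1 : ℤ) ^ rho y')) = (-1) ^ rho x)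

/-! ### Extensions of posets and poset maps -/

/-- The extension `Π̃ = Π ∪ (B ∖ Γ)` of a poset `Π` over `B`, along a map
`σ : Π → B` whose image is the lower order ideal `Γ = G ⊆ B`.  Elements are either
elements of `Π` (`Sum.inl`) or elements of `B ∖ G` (`Sum.inr`). -/
@[ext] structure ExtP {α β : Type} (σ : α → β) (G : Set β) : Type where
  elt : α ⊕ {x : β // x ∉ G}

namespace ExtP

variable {σ : α → β} {G : Set β}

instance instPartialOrder [PartialOrder α] [PartialOrder β] : PartialOrder (ExtP σ G) where
  le p q := match p, q with
    | ⟨.inl y⟩, ⟨.inl y'⟩ => y ≤ y'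
    | ⟨.inl y⟩, ⟨.inr x⟩ => ∃ y', y ≤ y' ∧ σ y' ≤ (x : β)
    | ⟨.inr _⟩, ⟨.inl _⟩ => False
    | ⟨.inr x⟩, ⟨.inr x'⟩ => x ≤ x'
  le_refl p := by
    rcases p with ⟨y | x⟩
    · exact (le_refl y : y ≤ y)
    · exact (le_refl x : x ≤ x)
  le_trans p q r hpq hqr := by
    rcases p with ⟨yp | xp⟩ <;> rcases q with ⟨yq | xq⟩ <;> rcases r with ⟨yr | xr⟩
    · exact (le_trans (hpq : yp ≤ yq) (hqr : yq ≤ yr) : yp ≤ yr)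
    · obtain ⟨y', h1, h2⟩ := (hqr : ∃ y', yq ≤ y' ∧ σ y' ≤ (xr : β))
      exact (⟨y', le_trans (hpq : yp ≤ yq) h1, h2⟩ : ∃ y', yp ≤ y' ∧ σ y' ≤ (xr : β))
    · exact (hqr : False).elim
    · obtain ⟨y', h1, h2⟩ := (hpq : ∃ y', yp ≤ y' ∧ σ y' ≤ (xq : β))
      exact (⟨y', h1, le_trans h2 (hqr : (xq : β) ≤ (xr : β))⟩ :
        ∃ y', yp ≤ y' ∧ σ y' ≤ (xr : β))
    · exact (hpq : False).elim
    · exact (hpq : False).elim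
    · exact (hqr : False).elim
    · exact (le_trans (hpq : xp ≤ xq) (hqr : xq ≤ xr) : xp ≤ xr)
  le_antisymm p q hpq hqp := by
    rcases p with ⟨yp | xp⟩ <;> rcases q with ⟨yq | xq⟩
    · have h : yp = yq := le_antisymm (hpq : yp ≤ yq) (hqp : yq ≤ yp)
      subst h; rfl
    · exact (hqp : False).elim
    · exact (hpq : False).elim
    · have h : xp = xq := le_antisymm (hpq : xp ≤ xq) (hqp : xq ≤ xp)
      subst h; rfl

/-- The inclusion of `Π` into the extension. -/
def inclDom (y : α) : ExtP σ G := ⟨.inl y⟩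

/-- The inclusion of `B ∖ Γ` into the extension. -/
def inclCompl (x : {x : β // x ∉ G}) : ExtP σ G := ⟨.inr x⟩

/-- The extension `σ̃ : Π̃ → B` of `σ`: it is `σ` on `Π` and the identity on `B ∖ Γ`. -/
def extMap (σ : α → β) (G : Set β) (p : ExtP σ G) : β :=
  match p.elt with
  | .inl y => σ y
  | .inr x => (x : β)

def equivSum : ExtP σ G ≃ α ⊕ {x : β // x ∉ G} where
  toFun := elt
  invFun := mk
  left_inv _ := rfl
  right_inv _ := rfl

instance [Finite α] [Finite β] : Finite (ExtP σ G) := by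
  have := Fintype.ofFinite α
  have := Fintype.ofFinite β
  exact Finite.of_equiv _ (equivSum (σ := σ) (G := G)).symm

end ExtP

/-! ### Intermediate posets and intermediate maps -/

/-- The lower order ideal `{x_0, …, x_i}` determined by a listing `x` of `B`. -/
def Iset {β : Type} {N : ℕ} (x : Fin (N + 1) → β) (i : ℕ) : Set β :=
  x '' {j | (j : ℕ) ≤ i}

/-- The intermediate poset `B_i = φ⁻¹{x_0, …, x_i} ∪ {x_{i+1}, …, x_N}` of a map
`φ : Γ → B` and a listing `x` of `B`. -/
abbrev InterPoset [PartialOrder α] [PartialOrder β] (φ : α → β) {N : ℕ}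
    (x : Fin (N + 1) → β) (i : ℕ) : Type :=
  ExtP (fun y : (φ ⁻¹' Iset x i) => φ (y : α)) (Iset x i)

/-- The intermediate map `φ_i : B_i → B_{i-1}`: it sends `y ∈ φ⁻¹(x_i)` to `x_i` and
every other element to itself. -/
def interMap [PartialOrder α] [PartialOrder β] (φ : α → β) {N : ℕ}
    (x : Fin (N + 1) → β) (i : ℕ) (p : InterPoset φ x i) : InterPoset φ x (i - 1) :=
  match p.elt with
  | .inl y =>
      if h : φ (y : α) ∈ Iset x (i - 1) then ⟨.inl ⟨(y : α), h⟩⟩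
      else ⟨.inr ⟨φ (y : α), h⟩⟩
  | .inr z =>
      ⟨.inr ⟨(z : β), fun hz => z.2 (by
        obtain ⟨j, hj, hje⟩ := hz
        exact ⟨j, le_trans hj (Nat.sub_le i 1), hje⟩)⟩⟩

/-! ### The flag enumerator, the `ab`-index and the `cd`-index -/

variable (K : Type) [Field K] [CharZero K]

/-- The free noncommutative algebra `K⟨a, b⟩`. -/
abbrev FA := FreeAlgebra K (Fin 2)

/-- The letter `a`. -/
def la : FA K := FreeAlgebra.ι K 0

/-- The letter `b`. -/
def lb : FA K := FreeAlgebra.ι K 1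

/-- `c = a + b`. -/
def lc : FA K := la K + lb K

/-- `d = ab + ba`. -/
def ld : FA K := la K * lb K + lb K * la K

/-- The characteristic monomial `u_S = u_1 ⋯ u_n` of a set `S` of ranks, where
`u_i = b` if `i ∈ S` and `u_i = a` otherwise. -/
def uWord (n : ℕ) (S : Set ℕ) : FA K :=
  (List.ofFn fun i : Fin n => if (i : ℕ) + 1 ∈ S then lb K else la K).prod

/-- Chains of the subposet `S` which contain the element `b0` (intended: the minimal
element of `S`). -/
def chainsIn [PartialOrder α] (S : Set α) (b0 : α) : Set (Finset α) :=
  {C | (C : Set α) ⊆ S ∧ IsChain (· ≤ ·) (C : Set α) ∧ b0 ∈ C}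

/-- The flag enumerator `Υ` of the subposet `S` with minimal element `b0`, of rank `n`;
ranks are computed relative to `b0`. -/
def upsSet [PartialOrder α] (S : Set α) (b0 : α) (n : ℕ) : FA K :=
  ∑ᶠ C ∈ chainsIn S b0, uWord K n ((fun y => rho y - rho b0) '' (C : Set α))

/-- The substitution `a ↦ a - b`, `b ↦ b` turning the flag enumerator into the
`ab`-index. -/
def toAB : FA K →ₐ[K] FA K :=
  FreeAlgebra.lift K (fun i : Fin 2 => if i = 0 then la K - lb K else lb K)

/-- The `ab`-index `Ψ` of the subposet `S` with minimal element `b0`, of rank `n`: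
`Ψ(a,b) = Υ(a-b, b)`. -/
def psiS [PartialOrder α] (S : Set α) (b0 : α) (n : ℕ) : FA K :=
  toAB K (upsSet K S b0 n)

/-- The subalgebra `K⟨c, d⟩ ⊆ K⟨a, b⟩` generated by `c = a + b` and `d = ab + ba`. -/
def cdSub : Subalgebra K (FA K) := Algebra.adjoin K {lc K, ld K}
/-- Chains of the subset `S` which contain the (global) minimum of the ambient poset:
by our convention all chains contain `0̂`. -/
def chainsMin [PartialOrder α] (S : Set α) : Set (Finset α) :=
  {C | (C : Set α) ⊆ S ∧ IsChain (· ≤ ·) (C : Set α) ∧ ∃ m ∈ C, ∀ z : α, m ≤ z}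

set_option linter.unusedSectionVars false
set_option maxHeartbeats 1000000

section Basic
variable [PartialOrder α] [Finite α]

lemma rho_set_bddAbove (x : α) : BddAbove {k : ℕ | ∃ s : Finset α,
    IsChain (· ≤ ·) (s : Set α) ∧ (s : Set α) ⊆ Set.Iic x ∧ s.card = k + 1} := by
  have := Fintype.ofFinite α
  refine ⟨Fintype.card α, fun k hk => ?_⟩
  obtain ⟨s, _, _, hcard⟩ := hk
  have := Finset.card_le_univ s
  omega

lemma rho_set_nonempty (x : α) : Set.Nonempty {k : ℕ | ∃ s : Finset α,
    IsChain (· ≤ ·) (s : Set α) ∧ (s : Set α) ⊆ Set.Iic x ∧ s.card = k + 1} := by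
  refine ⟨0, {x}, ?_, ?_, by simp⟩
  · simp [Set.Subsingleton.isChain]
  · simp

lemma chain_card_le_rho {x : α} {s : Finset α} (hc : IsChain (· ≤ ·) (s : Set α))
    (hs : (s : Set α) ⊆ Set.Iic x) : s.card ≤ rho x + 1 := by
  rcases Nat.eq_zero_or_pos s.card with h | h
  · omega
  · have : s.card - 1 ∈ {k : ℕ | ∃ s : Finset α,
      IsChain (· ≤ ·) (s : Set α) ∧ (s : Set α) ⊆ Set.Iic x ∧ s.card = k + 1} :=
      ⟨s, hc, hs, by omega⟩
    have := le_csSup (rho_set_bddAbove x) this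
    unfold rho
    omega

lemma exists_rho_chain (x : α) : ∃ s : Finset α, IsChain (· ≤ ·) (s : Set α) ∧
    (s : Set α) ⊆ Set.Iic x ∧ s.card = rho x + 1 := by
  have := Nat.sSup_mem (rho_set_nonempty x) (rho_set_bddAbove x)
  exact this

lemma rho_mono {y x : α} (h : y ≤ x) : rho y ≤ rho x := by
  obtain ⟨s, hc, hs, hcard⟩ := exists_rho_chain y
  have := chain_card_le_rho hc (hs.trans (Set.Iic_subset_Iic.2 h))
  omega

lemma rho_lt_of_lt {y x : α} (h : y < x) : rho y < rho x := by
  obtain ⟨s, hc, hs, hcard⟩ := exists_rho_chain y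
  have hx : x ∉ s := by
    intro hx
    have : x ≤ y := hs hx
    exact absurd this h.not_ge
  have hc' : IsChain (· ≤ ·) ((insert x s : Finset α) : Set α) := by
    rw [Finset.coe_insert]
    exact hc.insert (fun b hb _ => Or.inr ((hs hb).trans h.le))
  have hsub : ((insert x s : Finset α) : Set α) ⊆ Set.Iic x := by
    rw [Finset.coe_insert]
    exact Set.insert_subset (le_refl x) (hs.trans (Set.Iic_subset_Iic.2 h.le))
  have := chain_card_le_rho hc' hsub
  rw [Finset.card_insert_of_notMem hx] at this
  omega

lemma eq_of_le_of_rho_le {y x : α} (h : y ≤ x) (hr : rho x ≤ rho y) : y = x := by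
  rcases eq_or_lt_of_le h with h' | h'
  · exact h'
  · exact absurd (rho_lt_of_lt h') (by omega)

lemma rho_bot [OrderBot α] : rho (⊥ : α) = 0 := by
  have h := exists_rho_chain (⊥ : α)
  obtain ⟨s, hc, hs, hcard⟩ := h
  have : s ⊆ {⊥} := fun y hy => by
    simpa using le_antisymm (hs hy) bot_le
  have := Finset.card_le_card this
  simp at this
  omega

lemma eq_bot_of_rho_eq_zero [OrderBot α] {y : α} (h : rho y = 0) : y = ⊥ := by
  by_contra hne
  have : (⊥ : α) < y := bot_lt_iff_ne_bot.2 hne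
  have := rho_lt_of_lt this
  rw [rho_bot] at this
  omega

/-- A nonempty finite chain has a greatest element. -/
lemma chain_exists_greatest {s : Finset α} (hc : IsChain (· ≤ ·) (s : Set α))
    (hne : s.Nonempty) : ∃ m ∈ s, ∀ y ∈ s, y ≤ m := by
  obtain ⟨m, hm, hmax⟩ := s.exists_maximal hne
  refine ⟨m, hm, fun y hy => ?_⟩
  rcases eq_or_ne y m with rfl | hne'
  · exact le_refl y
  · rcases hc hy hm hne' with h | h
    · exact h
    · exact absurd (le_antisymm (hmax hy h) h) hne'

lemma chain_exists_least {s : Finset α} (hc : IsChain (· ≤ ·) (s : Set α))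
    (hne : s.Nonempty) : ∃ m ∈ s, ∀ y ∈ s, m ≤ y := by
  obtain ⟨m, hm, hmin⟩ := s.exists_minimal hne
  refine ⟨m, hm, fun y hy => ?_⟩
  rcases eq_or_ne y m with rfl | hne'
  · exact le_refl y
  · rcases hc hy hm hne' with h | h
    · exact absurd (le_antisymm h (hmin hy h)) hne'
    · exact h

/-- Bound on the cardinality of a chain all of whose elements lie between `w` and `z`. -/
lemma chain_card_le_of_forall_le {z w : α} {e : Finset α}
    (hc : IsChain (· ≤ ·) (e : Set α)) (he : (e : Set α) ⊆ Set.Iic z)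
    (hw : ∀ v ∈ e, w ≤ v) (hwz : w ≤ z) : e.card + rho w ≤ rho z + 1 := by
  obtain ⟨c, hcc, hcs, hccard⟩ := exists_rho_chain w
  have hunion : IsChain (· ≤ ·) ((c ∪ e : Finset α) : Set α) := by
    rw [Finset.coe_union]
    intro p hp q hq hpq
    rcases hp with hp | hp <;> rcases hq with hq | hq
    · exact hcc hp hq hpq
    · exact Or.inl ((hcs hp).trans (hw q hq))
    · exact Or.inr ((hcs hq).trans (hw p hp))
    · exact hc hp hq hpq
  have hsub : ((c ∪ e : Finset α) : Set α) ⊆ Set.Iic z := by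
    rw [Finset.coe_union]
    exact Set.union_subset (hcs.trans (Set.Iic_subset_Iic.2 hwz)) he
  have hb := chain_card_le_rho hunion hsub
  have hinter : c ∩ e ⊆ {w} := by
    intro p hp
    simp only [Finset.mem_inter] at hp
    have h1 : p ≤ w := hcs hp.1
    have h2 : w ≤ p := hw p hp.2
    simp [le_antisymm h1 h2]
  have h1 : (c ∩ e).card ≤ 1 := by
    have := Finset.card_le_card hinter
    simpa using this
  have h2 : (c ∪ e).card = c.card + e.card - (c ∩ e).card := by
    rw [← Finset.card_union_add_card_inter]
    omega
  omega

end Basic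

section Graded
variable [PartialOrder α] [Finite α] {n : ℕ}

/-- Every chain in a finite poset extends to a maximal chain. -/
lemma exists_maximal_superchain (s : Finset α) (hc : IsChain (· ≤ ·) (s : Set α)) :
    ∃ t : Finset α, s ⊆ t ∧ IsChain (· ≤ ·) (t : Set α) ∧
      (∀ t' : Finset α, IsChain (· ≤ ·) (t' : Set α) → t ⊆ t' → t = t') := by
  have := Fintype.ofFinite α
  -- take a chain containing s of maximal cardinality
  have hne : ({t : Finset α | s ⊆ t ∧ IsChain (· ≤ ·) (t : Set α)} : Set (Finset α)).Nonempty :=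
    ⟨s, Finset.Subset.refl s, hc⟩
  obtain ⟨t, ⟨hst, htc⟩, hmax⟩ :=
    Set.Finite.exists_maximalFor (fun t : Finset α => t.card)
      {t : Finset α | s ⊆ t ∧ IsChain (· ≤ ·) (t : Set α)} (Set.toFinite _) hne
  refine ⟨t, hst, htc, fun t' hct' htt' => ?_⟩
  by_contra hne'
  have hcard : t.card < t'.card := Finset.card_lt_card (Finset.ssubset_iff_subset_ne.2 ⟨htt', hne'⟩)
  have : t'.card ≤ t.card := hmax ⟨hst.trans htt', hct'⟩ (le_of_lt hcard)
  omega

variable (hg : IsGradedOfRank α n)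
include hg

lemma rho_le_rank (z : α) : rho z ≤ n := by
  obtain ⟨c, hcc, hcs, hccard⟩ := exists_rho_chain z
  obtain ⟨t, hst, htc, hmax⟩ := exists_maximal_superchain c hcc
  have htcard : t.card = n + 1 := hg t (by simp) htc (fun t' h1 h2 h3 => hmax t' h2 h3)
  have := Finset.card_le_card hst
  omega

lemma rho_top_of_graded [OrderTop α] : rho (⊤ : α) = n := by
  obtain ⟨t, hst, htc, hmax⟩ := exists_maximal_superchain (∅ : Finset α) (by simp)
  have htcard : t.card = n + 1 := hg t (by simp) htc (fun t' h1 h2 h3 => hmax t' h2 h3)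
  have h1 : t.card ≤ rho (⊤ : α) + 1 := chain_card_le_rho htc (fun y _ => le_top)
  have h2 := rho_le_rank hg (⊤ : α)
  omega

lemma eq_top_of_rho_eq_rank [OrderTop α] {z : α} (hz : rho z = n) : z = ⊤ := by
  rcases eq_or_lt_of_le (le_top : z ≤ ⊤) with h | h
  · exact h
  · have := rho_lt_of_lt h
    rw [rho_top_of_graded hg] at this
    omega

/-- Every non-top element lies below a coatom. -/
lemma exists_coatom_above [OrderTop α] {z : α} (hz : z ≠ ⊤) :
    ∃ w : α, z ≤ w ∧ rho w = n - 1 ∧ w ≠ ⊤ := by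
  have hzt : z < ⊤ := lt_top_iff_ne_top.2 hz
  have hchain : IsChain (· ≤ ·) (({z, ⊤} : Finset α) : Set α) := by
    intro p hp q hq hpq
    simp only [Finset.coe_insert, Finset.coe_singleton, Set.mem_insert_iff,
      Set.mem_singleton_iff] at hp hq
    rcases hp with rfl | rfl <;> rcases hq with rfl | rfl <;> simp_all
  obtain ⟨t, hst, htc, hmax⟩ := exists_maximal_superchain {z, ⊤} hchain
  have htcard : t.card = n + 1 := hg t (by simp) htc (fun t' h1 h2 h3 => hmax t' h2 h3)
  -- w := greatest element of t \ {⊤}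
  have htne : (t.erase ⊤).Nonempty := by
    refine ⟨z, Finset.mem_erase.2 ⟨hz, hst (by simp)⟩⟩
  have hec : IsChain (· ≤ ·) ((t.erase ⊤ : Finset α) : Set α) := by
    intro p hp q hq hpq
    exact htc (Finset.mem_coe.2 (Finset.mem_of_mem_erase (Finset.mem_coe.1 hp)))
      (Finset.mem_coe.2 (Finset.mem_of_mem_erase (Finset.mem_coe.1 hq))) hpq
  obtain ⟨w, hw, hwmax⟩ := chain_exists_greatest hec htne
  have hwne : w ≠ ⊤ := (Finset.mem_erase.1 hw).1
  refine ⟨w, ?_, ?_, hwne⟩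
  · exact hwmax z (Finset.mem_erase.2 ⟨hz, hst (by simp)⟩)
  · -- rho w = n - 1
    have hsub : ((t.erase ⊤ : Finset α) : Set α) ⊆ Set.Iic w := fun p hp =>
      hwmax p (Finset.mem_coe.1 hp)
    have h1 := chain_card_le_rho hec hsub
    have hecard : (t.erase ⊤).card = n := by
      rw [Finset.card_erase_of_mem (hst (by simp))]
      omega
    have h2 : rho w < n := by
      have := rho_lt_of_lt (lt_top_iff_ne_top.2 hwne)
      rw [rho_top_of_graded hg] at this
      exact this
    omega

end Graded

section Listing
variable [PartialOrder β] [Finite β] [OrderBot β] [OrderTop β] {n N : ℕ}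
  {x : Fin (N + 1) → β}
  (hg : IsGradedOfRank β n)
  (hbij : Function.Bijective x)
  (hmono : ∀ i j : Fin (N + 1), i ≤ j → rho (x i) ≤ rho (x j))

include hg hbij hmono

lemma rho_le_of_mem_Iset {j : Fin (N + 1)} {z : β} (hz : z ∈ Iset x (j : ℕ)) :
    rho z ≤ rho (x j) := by
  obtain ⟨k, hk, rfl⟩ := hz
  exact hmono k j (by exact Fin.mk_le_mk.2 hk)

lemma mem_Iset_self (j : Fin (N + 1)) : x j ∈ Iset x (j : ℕ) :=
  ⟨j, by simp, rfl⟩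

lemma Iset_lower {j : ℕ} {z z' : β} (hz : z ∈ Iset x j) (hle : z' ≤ z) :
    z' ∈ Iset x j := by
  obtain ⟨k, hk, rfl⟩ := hz
  obtain ⟨k', rfl⟩ := hbij.2 z'
  rcases eq_or_lt_of_le hle with h | h
  · exact ⟨k, hk, h.symm⟩
  · refine ⟨k', ?_, rfl⟩
    simp only [Set.mem_setOf_eq] at hk ⊢
    by_contra hk'
    have : (k : Fin (N+1)) ≤ k' := by
      rw [Fin.le_def]; omega
    exact absurd (rho_lt_of_lt h) (not_lt.2 (hmono k k' this))

lemma x_last_eq_top : x (Fin.last N) = ⊤ := by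
  obtain ⟨k, hk⟩ := hbij.2 (⊤ : β)
  have h1 : rho (x k) = n := by rw [hk]; exact rho_top_of_graded hg
  have h2 : rho (x (Fin.last N)) ≤ n := rho_le_rank hg _
  have h3 := hmono k (Fin.last N) (Fin.le_last k)
  exact eq_top_of_rho_eq_rank hg (by omega)

lemma top_not_mem_Iset {j : ℕ} (hj : j < N) : (⊤ : β) ∉ Iset x j := by
  rintro ⟨k, hk, hke⟩
  have : k = Fin.last N := hbij.1 (by rw [hke, x_last_eq_top hg hbij hmono])
  subst this
  simp only [Set.mem_setOf_eq, Fin.val_last] at hk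
  omega

lemma Iic_subset_Iset (j : Fin (N + 1)) : Set.Iic (x j) ⊆ Iset x (j : ℕ) := by
  intro z hz
  exact Iset_lower hg hbij hmono (mem_Iset_self hg hbij hmono j) hz

lemma Iio_subset_Iset_pred {j : Fin (N + 1)} (hj : 1 ≤ (j : ℕ)) :
    Set.Iio (x j) ⊆ Iset x ((j : ℕ) - 1) := by
  intro z hz
  obtain ⟨k, rfl⟩ := hbij.2 z
  have hlt : rho (x k) < rho (x j) := rho_lt_of_lt hz
  have hkj : (k : ℕ) < (j : ℕ) := by
    by_contra h
    exact absurd (hmono j k (by rw [Fin.le_def]; omega)) (not_le.2 hlt)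
  exact ⟨k, by simp only [Set.mem_setOf_eq]; omega, rfl⟩

lemma not_mem_Iset_pred {j : Fin (N + 1)} (hj : 1 ≤ (j : ℕ)) :
    x j ∉ Iset x ((j : ℕ) - 1) := by
  rintro ⟨k, hk, hke⟩
  have : k = j := hbij.1 hke
  subst this
  simp only [Set.mem_setOf_eq] at hk
  omega

lemma eq_of_mem_Iset_of_le {j : Fin (N + 1)} {z : β}
    (hz : z ∈ Iset x (j : ℕ)) (hle : x j ≤ z) : z = x j :=
  (eq_of_le_of_rho_le hle (rho_le_of_mem_Iset hg hbij hmono hz)).symm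

lemma x_zero_eq_bot : x 0 = ⊥ := by
  obtain ⟨k, hk⟩ := hbij.2 (⊥ : β)
  have h1 : rho (x 0) ≤ rho (x k) := hmono 0 k (Fin.zero_le k)
  rw [hk, rho_bot] at h1
  exact eq_bot_of_rho_eq_zero (by omega)

end Listing

section PhiFacts
variable [PartialOrder α] [PartialOrder β] [OrderBot α] [OrderBot β]
  {φ : α → β} (hφ : IsSFS φ)
include hφ

lemma phi_bot : φ (⊥ : α) = ⊥ := by
  obtain ⟨y0, hy0⟩ := hφ.2.2.1 (⊥ : β)
  have := hφ.1 (bot_le : (⊥ : α) ≤ y0)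
  rw [hy0] at this
  exact le_antisymm this bot_le

end PhiFacts

section ExtPOrder
variable {A : Type} [PartialOrder A] [PartialOrder β] {σ : A → β} {G : Set β}

lemma inl_le_inl {y y' : A} :
    (⟨.inl y⟩ : ExtP σ G) ≤ ⟨.inl y'⟩ ↔ y ≤ y' := Iff.rfl

lemma inl_le_inr {y : A} {w : {v : β // v ∉ G}} :
    (⟨.inl y⟩ : ExtP σ G) ≤ ⟨.inr w⟩ ↔ ∃ y', y ≤ y' ∧ σ y' ≤ (w : β) := Iff.rfl

lemma not_inr_le_inl {y : A} {w : {v : β // v ∉ G}} :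
    ¬ ((⟨.inr w⟩ : ExtP σ G) ≤ ⟨.inl y⟩) := fun h => h

lemma inr_le_inr {w w' : {v : β // v ∉ G}} :
    (⟨.inr w⟩ : ExtP σ G) ≤ ⟨.inr w'⟩ ↔ (w : β) ≤ (w' : β) := Iff.rfl

end ExtPOrder

section InterFacts
variable [PartialOrder α] [Finite α] [OrderBot α]
  [PartialOrder β] [Finite β] [OrderBot β] [OrderTop β] {n N : ℕ}
  {φ : α → β} {x : Fin (N + 1) → β}

/-- Extract the `α`-component of an element of the intermediate poset. -/
def fL (φ : α → β) (x : Fin (N + 1) → β) (j : ℕ) (p : InterPoset φ x j) : α :=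
  match p.elt with
  | .inl y => (y : α)
  | .inr _ => ⊥

/-- Extract the `β`-component of an element of the intermediate poset. -/
def fR (φ : α → β) (x : Fin (N + 1) → β) (j : ℕ) (p : InterPoset φ x j) : β :=
  match p.elt with
  | .inl _ => ⊥
  | .inr w => (w : β)

/-- The `α`-part of a subset of the intermediate poset. -/
def projL (j : ℕ) (C : Finset (InterPoset φ x j)) : Finset α :=
  (C.filter (fun p => p.elt.isLeft)).image (fL φ x j)

/-- The `β`-part of a subset of the intermediate poset. -/
def projR (j : ℕ) (C : Finset (InterPoset φ x j)) : Finset β :=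
  (C.filter (fun p => p.elt.isRight)).image (fR φ x j)

/-- Reassemble a subset of the intermediate poset from its two parts. -/
def glue (φ : α → β) (x : Fin (N + 1) → β) (j : ℕ) (d : Finset α) (e : Finset β) :
    Finset (InterPoset φ x j) :=
  (Set.toFinite {p : InterPoset φ x j | match p.elt with
    | .inl y => (y : α) ∈ d
    | .inr w => (w : β) ∈ e}).toFinset

lemma mem_glue {j : ℕ} {d : Finset α} {e : Finset β} {p : InterPoset φ x j} :
    p ∈ glue φ x j d e ↔ (match p.elt with
      | .inl y => (y : α) ∈ d
      | .inr w => (w : β) ∈ e) := by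
  unfold glue
  rw [Set.Finite.mem_toFinset]
  rfl

lemma mem_glue_inl {j : ℕ} {d : Finset α} {e : Finset β} {y : ↥(φ ⁻¹' Iset x j)} :
    (⟨.inl y⟩ : InterPoset φ x j) ∈ glue φ x j d e ↔ (y : α) ∈ d := by
  rw [mem_glue]

lemma mem_glue_inr {j : ℕ} {d : Finset α} {e : Finset β} {w : {v : β // v ∉ Iset x j}} :
    (⟨.inr w⟩ : InterPoset φ x j) ∈ glue φ x j d e ↔ (w : β) ∈ e := by
  rw [mem_glue]

lemma mem_projL {j : ℕ} {C : Finset (InterPoset φ x j)} {a : α} :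
    a ∈ projL j C ↔ ∃ h : φ a ∈ Iset x j, (⟨.inl ⟨a, h⟩⟩ : InterPoset φ x j) ∈ C := by
  constructor
  · intro ha
    obtain ⟨p, hp, hpa⟩ := Finset.mem_image.1 ha
    obtain ⟨hpC, hpl⟩ := Finset.mem_filter.1 hp
    rcases p with ⟨py | pw⟩
    · refine ⟨?_, ?_⟩
      · rw [← hpa]; exact py.2
      · convert hpC using 2
        simp [fL] at hpa
        subst hpa
        rfl
    · simp [Sum.isLeft] at hpl
  · rintro ⟨h, hC⟩
    refine Finset.mem_image.2 ⟨⟨.inl ⟨a, h⟩⟩, Finset.mem_filter.2 ⟨hC, rfl⟩, rfl⟩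

lemma mem_projR {j : ℕ} {C : Finset (InterPoset φ x j)} {b : β} :
    b ∈ projR j C ↔ ∃ h : b ∉ Iset x j, (⟨.inr ⟨b, h⟩⟩ : InterPoset φ x j) ∈ C := by
  constructor
  · intro hb
    obtain ⟨p, hp, hpb⟩ := Finset.mem_image.1 hb
    obtain ⟨hpC, hpr⟩ := Finset.mem_filter.1 hp
    rcases p with ⟨py | pw⟩
    · simp [Sum.isRight] at hpr
    · refine ⟨?_, ?_⟩
      · rw [← hpb]; exact pw.2
      · convert hpC using 2
        simp [fR] at hpb
        subst hpb
        rfl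
  · rintro ⟨h, hC⟩
    refine Finset.mem_image.2 ⟨⟨.inr ⟨b, h⟩⟩, Finset.mem_filter.2 ⟨hC, rfl⟩, rfl⟩

lemma glue_proj {j : ℕ} (C : Finset (InterPoset φ x j)) :
    glue φ x j (projL j C) (projR j C) = C := by
  ext p
  rw [mem_glue]
  rcases p with ⟨py | pw⟩
  · show (py : α) ∈ projL j C ↔ _
    rw [mem_projL]
    constructor
    · rintro ⟨h, hC⟩
      convert hC using 2
    · intro h
      exact ⟨py.2, by convert h using 2⟩
  · show (pw : β) ∈ projR j C ↔ _
    rw [mem_projR]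
    constructor
    · rintro ⟨h, hC⟩
      convert hC using 2
    · intro h
      exact ⟨pw.2, by convert h using 2⟩

lemma projL_glue {j : ℕ} {d : Finset α} {e : Finset β}
    (hd : ∀ a ∈ d, φ a ∈ Iset x j) : projL j (glue φ x j d e) = d := by
  ext a
  rw [mem_projL]
  constructor
  · rintro ⟨h, hC⟩
    exact mem_glue_inl.1 hC
  · intro ha
    exact ⟨hd a ha, mem_glue_inl.2 ha⟩

lemma projR_glue {j : ℕ} {d : Finset α} {e : Finset β}
    (he : ∀ b ∈ e, b ∉ Iset x j) : projR j (glue φ x j d e) = e := by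
  ext b
  rw [mem_projR]
  constructor
  · rintro ⟨h, hC⟩
    exact mem_glue_inr.1 hC
  · intro hb
    exact ⟨he b hb, mem_glue_inr.2 hb⟩

lemma projL_chain {j : ℕ} {C : Finset (InterPoset φ x j)}
    (hc : IsChain (· ≤ ·) (C : Set (InterPoset φ x j))) :
    IsChain (· ≤ ·) ((projL j C : Finset α) : Set α) := by
  intro a ha b hb hab
  obtain ⟨ha', haC⟩ := mem_projL.1 (Finset.mem_coe.1 ha)
  obtain ⟨hb', hbC⟩ := mem_projL.1 (Finset.mem_coe.1 hb)
  have hne : (⟨.inl ⟨a, ha'⟩⟩ : InterPoset φ x j) ≠ ⟨.inl ⟨b, hb'⟩⟩ := by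
    intro h
    apply hab
    have := congrArg (fL φ x j) h
    simpa [fL] using this
  rcases hc haC hbC hne with h | h
  · have h' : (⟨a, ha'⟩ : ↥(φ ⁻¹' Iset x j)) ≤ ⟨b, hb'⟩ := h
    exact Or.inl h'
  · have h' : (⟨b, hb'⟩ : ↥(φ ⁻¹' Iset x j)) ≤ ⟨a, ha'⟩ := h
    exact Or.inr h' 

lemma projR_chain {j : ℕ} {C : Finset (InterPoset φ x j)}
    (hc : IsChain (· ≤ ·) (C : Set (InterPoset φ x j))) :
    IsChain (· ≤ ·) ((projR j C : Finset β) : Set β) := by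
  intro a ha b hb hab
  obtain ⟨ha', haC⟩ := mem_projR.1 (Finset.mem_coe.1 ha)
  obtain ⟨hb', hbC⟩ := mem_projR.1 (Finset.mem_coe.1 hb)
  have hne : (⟨.inr ⟨a, ha'⟩⟩ : InterPoset φ x j) ≠ ⟨.inr ⟨b, hb'⟩⟩ := by
    intro h
    apply hab
    have := congrArg (fR φ x j) h
    simpa [fR] using this
  rcases hc haC hbC hne with h | h
  · have h' : (⟨a, ha'⟩ : {v : β // v ∉ Iset x j}) ≤ ⟨b, hb'⟩ := h
    exact Or.inl h'
  · have h' : (⟨b, hb'⟩ : {v : β // v ∉ Iset x j}) ≤ ⟨a, ha'⟩ := h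
    exact Or.inr h' 

lemma card_proj {j : ℕ} (C : Finset (InterPoset φ x j)) :
    C.card = (projL j C).card + (projR j C).card := by
  have h1 : (projL j C).card = (C.filter (fun p => p.elt.isLeft)).card := by
    apply Finset.card_image_of_injOn
    intro p hp q hq hpq
    obtain ⟨-, hp'⟩ := Finset.mem_filter.1 (Finset.mem_coe.1 hp)
    obtain ⟨-, hq'⟩ := Finset.mem_filter.1 (Finset.mem_coe.1 hq)
    rcases p with ⟨py | pw⟩
    · rcases q with ⟨qy | qw⟩
      · simp [fL] at hpq
        have : (py : α) = (qy : α) := hpq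
        cases py; cases qy
        simp_all
      · simp [Sum.isRight] at hq'
    · simp [Sum.isLeft] at hp'
  have h2 : (projR j C).card = (C.filter (fun p => p.elt.isRight)).card := by
    apply Finset.card_image_of_injOn
    intro p hp q hq hpq
    obtain ⟨-, hp'⟩ := Finset.mem_filter.1 (Finset.mem_coe.1 hp)
    obtain ⟨-, hq'⟩ := Finset.mem_filter.1 (Finset.mem_coe.1 hq)
    rcases p with ⟨py | pw⟩
    · simp [Sum.isLeft] at hp'
    · rcases q with ⟨qy | qw⟩
      · simp [Sum.isRight] at hq'
      · simp [fR] at hpq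
        have : (pw : β) = (qw : β) := hpq
        cases pw; cases qw
        simp_all
  rw [h1, h2]
  rw [← Finset.card_filter_add_card_filter_not (p := fun p => p.elt.isLeft)]
  have heq : Finset.filter (fun p => p.elt.isRight = true) C
      = Finset.filter (fun a => ¬ a.elt.isLeft = true) C := by
    apply Finset.filter_congr
    intro p _
    rcases p with ⟨py | pw⟩ <;> simp [Sum.isLeft, Sum.isRight]
  rw [heq]

end InterFacts

section RhoInter
variable [PartialOrder α] [Finite α] [OrderBot α]
  [PartialOrder β] [Finite β] [OrderBot β] [OrderTop β] {n N : ℕ}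
  {φ : α → β} {x : Fin (N + 1) → β}

lemma isChain_anti {γ : Type} {r : γ → γ → Prop} {s t : Set γ} (h : s ⊆ t)
    (hc : IsChain r t) : IsChain r s := fun a ha b hb hab => hc (h ha) (h hb) hab

lemma glue_chain {j : ℕ} {d : Finset α} {e : Finset β}
    (hd : IsChain (· ≤ ·) (d : Set α)) (he : IsChain (· ≤ ·) (e : Set β))
    (hcross : ∀ a ∈ d, ∀ b ∈ e, ∃ a', a ≤ a' ∧ φ a' ∈ Iset x j ∧ φ a' ≤ b) :
    IsChain (· ≤ ·) ((glue φ x j d e : Finset (InterPoset φ x j)) :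
      Set (InterPoset φ x j)) := by
  intro p hp q hq hpq
  have hp' := mem_glue.1 (Finset.mem_coe.1 hp)
  have hq' := mem_glue.1 (Finset.mem_coe.1 hq)
  rcases p with ⟨py | pw⟩ <;> rcases q with ⟨qy | qw⟩
  · have h1 : (py : α) ∈ d := hp'
    have h2 : (qy : α) ∈ d := hq'
    have hne : (py : α) ≠ (qy : α) := by
      intro h
      apply hpq
      cases py ; cases qy
      simp_all
    rcases hd h1 h2 hne with h | h
    · exact Or.inl h
    · exact Or.inr h
  · have h1 : (py : α) ∈ d := hp'
    have h2 : (qw : β) ∈ e := hq'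
    obtain ⟨a', ha1, ha2, ha3⟩ := hcross _ h1 _ h2
    exact Or.inl ⟨⟨a', ha2⟩, ha1, ha3⟩
  · have h1 : (pw : β) ∈ e := hp'
    have h2 : (qy : α) ∈ d := hq'
    obtain ⟨a', ha1, ha2, ha3⟩ := hcross _ h2 _ h1
    exact Or.inr ⟨⟨a', ha2⟩, ha1, ha3⟩
  · have h1 : (pw : β) ∈ e := hp'
    have h2 : (qw : β) ∈ e := hq'
    have hne : (pw : β) ≠ (qw : β) := by
      intro h
      apply hpq
      cases pw ; cases qw
      simp_all
    rcases he h1 h2 hne with h | h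
    · exact Or.inl h
    · exact Or.inr h

variable (hg : IsGradedOfRank β n) (hφ : IsSFS φ)
  (hbij : Function.Bijective x)
  (hmono : ∀ i j : Fin (N + 1), i ≤ j → rho (x i) ≤ rho (x j))

include hg hφ hbij hmono

/-- The rank of `⟨.inl y⟩` in the intermediate poset is the rank of `y` in `Γ`. -/
lemma rho_inl {j : ℕ} (y : ↥(φ ⁻¹' Iset x j)) :
    rho (⟨.inl y⟩ : InterPoset φ x j) = rho (y : α) := by
  apply le_antisymm
  · obtain ⟨C, hcc, hcs, hccard⟩ := exists_rho_chain (⟨.inl y⟩ : InterPoset φ x j)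
    have hR : projR j C = ∅ := by
      rw [Finset.eq_empty_iff_forall_notMem]
      intro b hb
      obtain ⟨hb1, hb2⟩ := mem_projR.1 hb
      exact hcs hb2
    have hcard := card_proj C
    rw [hR] at hcard
    simp at hcard
    have hsub : ((projL j C : Finset α) : Set α) ⊆ Set.Iic (y : α) := by
      intro a ha
      obtain ⟨h1, h2⟩ := mem_projL.1 (Finset.mem_coe.1 ha)
      exact hcs h2
    have := chain_card_le_rho (projL_chain hcc) hsub
    omega
  · obtain ⟨c, hcc, hcs, hccard⟩ := exists_rho_chain (y : α)
    have hdG : ∀ a ∈ c, φ a ∈ Iset x j := by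
      intro a ha
      have h1 : a ≤ (y : α) := hcs ha
      exact Iset_lower hg hbij hmono y.2 (hφ.1 h1)
    have hchain := glue_chain (φ := φ) (x := x) (j := j) (e := ∅) hcc (by simp)
      (by simp)
    have hsub : ((glue φ x j c ∅ : Finset (InterPoset φ x j)) :
        Set (InterPoset φ x j)) ⊆ Set.Iic (⟨.inl y⟩ : InterPoset φ x j) := by
      intro p hp
      have hp' := mem_glue.1 (Finset.mem_coe.1 hp)
      rcases p with ⟨py | pw⟩
      · have h1 : (py : α) ∈ c := hp'
        have h2 : (py : α) ≤ (y : α) := hcs h1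
        exact h2
      · exact absurd hp' (Finset.notMem_empty _)
    have hb := chain_card_le_rho hchain hsub
    have hcard := card_proj (glue φ x j c ∅)
    rw [projL_glue hdG, projR_glue (by simp)] at hcard
    simp at hcard
    omega

omit hg hbij hmono in
/-- Lifting a chain of the ideal `Iset x j` to a chain in `Γ`. -/
lemma lift_chain {j : ℕ} (k : ℕ) :
    ∀ c : Finset β, c.card = k → (c : Set β) ⊆ Iset x j →
    IsChain (· ≤ ·) (c : Set β) → c.Nonempty →
    ∃ d : Finset α, IsChain (· ≤ ·) (d : Set α) ∧ d.image φ = c ∧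
      ∃ m ∈ d, (∀ a ∈ d, a ≤ m) ∧ (∀ z ∈ c, z ≤ φ m) := by
  induction k with
  | zero =>
    intro c hcard _ _ hne
    exact absurd (Finset.card_eq_zero.1 hcard) (Finset.nonempty_iff_ne_empty.1 hne)
  | succ k ih =>
    intro c hcard hcs hcc hne
    obtain ⟨mc, hmc, hmcmax⟩ := chain_exists_greatest hcc hne
    rcases Nat.eq_zero_or_pos k with hk | hk
    · have hcone : c.card = 1 := by omega
      obtain ⟨a, ha⟩ := Finset.card_eq_one.1 hcone
      obtain ⟨y', hy'1, hy'2, hy'3⟩ := hφ.2.2.2.1 ⊥ a (by rw [phi_bot hφ]; exact bot_le)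
      refine ⟨{y'}, by rw [Finset.coe_singleton]; exact Set.subsingleton_singleton.isChain,
        by simp [hy'2, ha], y', by simp, by simp, ?_⟩
      intro z hz
      rw [ha, Finset.mem_singleton] at hz
      subst hz
      rw [hy'2]
    · have hmc' : (c.erase mc).card = k := by
        rw [Finset.card_erase_of_mem hmc]; omega
      have hERs : ((c.erase mc : Finset β) : Set β) ⊆ Iset x j := by
        intro z hz
        exact hcs (Finset.mem_coe.2 (Finset.mem_of_mem_erase (Finset.mem_coe.1 hz)))
      have hERc : IsChain (· ≤ ·) ((c.erase mc : Finset β) : Set β) :=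
        isChain_anti (Finset.coe_subset.2 (Finset.erase_subset _ _)) hcc
      have hERne : (c.erase mc).Nonempty := Finset.card_pos.1 (by omega)
      obtain ⟨d', hd'c, hd'img, m', hm'd, hm'max, hm'ge⟩ := ih _ hmc' hERs hERc hERne
      have hφm' : φ m' ∈ c := by
        have h1 : φ m' ∈ d'.image φ := Finset.mem_image_of_mem φ hm'd
        rw [hd'img] at h1
        exact Finset.mem_of_mem_erase h1
      obtain ⟨y1, hy11, hy12, _⟩ := hφ.2.2.2.1 m' mc (hmcmax _ hφm')
      have hy1d' : y1 ∉ d' := by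
        intro h
        have h1 : φ y1 ∈ d'.image φ := Finset.mem_image_of_mem φ h
        rw [hd'img, hy12] at h1
        exact (Finset.notMem_erase mc c) h1
      refine ⟨insert y1 d', ?_, ?_, y1, Finset.mem_insert_self _ _, ?_, ?_⟩
      · rw [Finset.coe_insert]
        exact hd'c.insert (fun b hb _ => Or.inr ((hm'max b hb).trans hy11))
      · rw [Finset.image_insert, hy12, hd'img, Finset.insert_erase hmc]
      · intro a ha
        rcases Finset.mem_insert.1 ha with rfl | ha'
        · exact le_refl _
        · exact (hm'max a ha').trans hy11
      · intro z hz
        rw [hy12]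
        exact hmcmax z hz

/-- The rank of `⟨.inr w⟩` in the intermediate poset is the rank of `w` in `B`. -/
lemma rho_inr {j : ℕ} (w : {v : β // v ∉ Iset x j}) :
    rho (⟨.inr w⟩ : InterPoset φ x j) = rho (w : β) := by
  have key : ∀ (a : α) (ha : φ a ∈ Iset x j) (zb : β) (hz : zb ∉ Iset x j),
      (⟨.inl ⟨a, ha⟩⟩ : InterPoset φ x j) ≤ ⟨.inr ⟨zb, hz⟩⟩ → rho a < rho zb := by
    rintro a ha zb hz ⟨y', h1, h2⟩
    have h3 : rho a ≤ rho (y' : α) := rho_mono h1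
    have h4 : rho (y' : α) ≤ rho (φ (y' : α)) := hφ.2.1 _
    have h5 : φ (y' : α) ≠ zb := fun h => hz (h ▸ y'.2)
    have h6 : rho (φ (y' : α)) < rho zb := rho_lt_of_lt (lt_of_le_of_ne h2 h5)
    omega
  apply le_antisymm
  · obtain ⟨C, hcc, hcs, hccard⟩ := exists_rho_chain (⟨.inr w⟩ : InterPoset φ x j)
    have hcard := card_proj C
    have hdRs : ((projR j C : Finset β) : Set β) ⊆ Set.Iic (w : β) := by
      intro b hb
      obtain ⟨h1, h2⟩ := mem_projR.1 (Finset.mem_coe.1 hb)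
      exact hcs h2
    rcases Finset.eq_empty_or_nonempty (projL j C) with hL | hL
    · have := chain_card_le_rho (projR_chain hcc) hdRs
      rw [hL] at hcard
      simp at hcard
      omega
    · obtain ⟨m, hm, hmmax⟩ := chain_exists_greatest (projL_chain hcc) hL
      obtain ⟨hm1, hm2⟩ := mem_projL.1 hm
      have hcardL : (projL j C).card ≤ rho m + 1 := by
        apply chain_card_le_rho (projL_chain hcc)
        intro a ha
        exact hmmax a (Finset.mem_coe.1 ha)
      rcases Finset.eq_empty_or_nonempty (projR j C) with hR | hR
      · have h1 : rho m < rho (w : β) := by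
          refine key m hm1 (w : β) w.2 ?_
          exact hcs hm2
        rw [hR] at hcard
        simp at hcard
        omega
      · obtain ⟨w1, hw1, hw1min⟩ := chain_exists_least (projR_chain hcc) hR
        obtain ⟨hw11, hw12⟩ := mem_projR.1 hw1
        have h1 : rho m < rho w1 := by
          refine key m hm1 w1 hw11 ?_
          have hne : (⟨.inl ⟨m, hm1⟩⟩ : InterPoset φ x j) ≠ ⟨.inr ⟨w1, hw11⟩⟩ := by
            intro h
            simpa using congrArg (fun p => (ExtP.elt p).isLeft) h
          rcases hcc hm2 hw12 hne with h | h
          · exact h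
          · exact absurd h not_inr_le_inl
        have h2 : (projR j C).card + rho w1 ≤ rho (w : β) + 1 :=
          chain_card_le_of_forall_le (projR_chain hcc) hdRs
            (fun v hv => hw1min v hv) (hdRs hw1)
        omega
  · obtain ⟨c, hcc, hcs, hccard⟩ := exists_rho_chain (w : β)
    set c1 := c.filter (fun z => z ∈ Iset x j) with hc1def
    set c2 := c.filter (fun z => z ∉ Iset x j) with hc2def
    have hsplit : c1.card + c2.card = c.card := by
      rw [hc1def, hc2def]
      exact Finset.card_filter_add_card_filter_not _
    have hc2c : c2 ⊆ c := Finset.filter_subset _ _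
    have hc2chain : IsChain (· ≤ ·) (c2 : Set β) :=
      isChain_anti (Finset.coe_subset.2 hc2c) hcc
    have hc2G : ∀ b ∈ c2, b ∉ Iset x j := fun b hb => (Finset.mem_filter.1 hb).2
    rcases Finset.eq_empty_or_nonempty c1 with h1 | h1
    · have hchain := glue_chain (φ := φ) (x := x) (j := j) (d := ∅) (e := c2)
        (by simp) hc2chain (by simp)
      have hsub : ((glue φ x j ∅ c2 : Finset (InterPoset φ x j)) :
          Set (InterPoset φ x j)) ⊆ Set.Iic (⟨.inr w⟩ : InterPoset φ x j) := by
        intro p hp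
        have hp' := mem_glue.1 (Finset.mem_coe.1 hp)
        rcases p with ⟨py | pw⟩
        · exact absurd hp' (Finset.notMem_empty _)
        · have hb : (pw : β) ∈ c2 := hp'
          have : (pw : β) ≤ (w : β) := hcs (hc2c hb)
          exact this
      have hb := chain_card_le_rho hchain hsub
      have hcard := card_proj (glue φ x j ∅ c2)
      rw [projL_glue (by simp), projR_glue hc2G] at hcard
      simp only [Finset.card_empty] at hcard
      have hc10 : c1.card = 0 := by rw [h1]; simp
      omega
    · have hc1s : (c1 : Set β) ⊆ Iset x j := by
        intro z hz
        exact (Finset.mem_filter.1 (Finset.mem_coe.1 hz)).2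
      have hc1chain : IsChain (· ≤ ·) (c1 : Set β) :=
        isChain_anti (Finset.coe_subset.2 (Finset.filter_subset _ _)) hcc
      obtain ⟨d, hdc, hdimg, m, hmd, hmmax, hmge⟩ :=
        lift_chain hφ c1.card c1 rfl hc1s hc1chain h1
      have hdG : ∀ a ∈ d, φ a ∈ Iset x j := by
        intro a ha
        have : φ a ∈ d.image φ := Finset.mem_image_of_mem φ ha
        rw [hdimg] at this
        exact hc1s this
      have hφm : φ m ∈ c1 := by
        have : φ m ∈ d.image φ := Finset.mem_image_of_mem φ hmd
        rwa [hdimg] at this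
      have hcross : ∀ a ∈ d, ∀ b ∈ c2, ∃ a', a ≤ a' ∧ φ a' ∈ Iset x j ∧ φ a' ≤ b := by
        intro a ha b hb
        refine ⟨m, hmmax a ha, hc1s hφm, ?_⟩
        have hne : φ m ≠ b := fun h => (hc2G b hb) (h ▸ hc1s hφm)
        rcases hcc (Finset.mem_coe.2 (Finset.filter_subset _ _ hφm))
          (Finset.mem_coe.2 (hc2c hb)) hne with h | h
        · exact h
        · exact absurd (Iset_lower hg hbij hmono (hc1s hφm) h) (hc2G b hb)
      have hchain := glue_chain (φ := φ) (x := x) (j := j) hdc hc2chain hcross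
      have hsub : ((glue φ x j d c2 : Finset (InterPoset φ x j)) :
          Set (InterPoset φ x j)) ⊆ Set.Iic (⟨.inr w⟩ : InterPoset φ x j) := by
        intro p hp
        have hp' := mem_glue.1 (Finset.mem_coe.1 hp)
        rcases p with ⟨py | pw⟩
        · have ha : (py : α) ∈ d := hp'
          show ∃ y' : ↥(φ ⁻¹' Iset x j), py ≤ y' ∧ φ (y' : α) ≤ (w : β)
          refine ⟨⟨m, hc1s hφm⟩, hmmax _ ha, ?_⟩
          exact hcs (Finset.mem_coe.2 (Finset.filter_subset _ _ hφm))
        · have hb : (pw : β) ∈ c2 := hp'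
          have : (pw : β) ≤ (w : β) := hcs (hc2c hb)
          exact this
      have hb := chain_card_le_rho hchain hsub
      have hcard := card_proj (glue φ x j d c2)
      rw [projL_glue hdG, projR_glue hc2G] at hcard
      have hdcard : c1.card ≤ d.card := by
        rw [← hdimg]
        exact Finset.card_image_le
      omega

end RhoInter

section BoundaryFacts
variable [PartialOrder α] [Finite α] [OrderBot α]
  [PartialOrder β] [Finite β] [OrderBot β] [OrderTop β] {n N : ℕ}
  {φ : α → β} {x : Fin (N + 1) → β}

variable (hgΓ : IsGradedOfRank α n) (hgB : IsGradedOfRank β n) (hφ : IsSFS φ)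
  (hbij : Function.Bijective x)
  (hmono : ∀ i j : Fin (N + 1), i ≤ j → rho (x i) ≤ rho (x j))

include hgB hφ hbij hmono

lemma phi_bot_mem_Iset {j : ℕ} : φ ⊥ ∈ Iset x j := by
  rw [phi_bot hφ, ← x_zero_eq_bot hgB hbij hmono]
  exact ⟨0, by simp, rfl⟩

lemma botP_le {j : ℕ} (p : InterPoset φ x j) :
    (⟨.inl ⟨⊥, phi_bot_mem_Iset hgB hφ hbij hmono⟩⟩ : InterPoset φ x j) ≤ p := by
  rcases p with ⟨py | pw⟩
  · show (⟨⊥, _⟩ : ↥(φ ⁻¹' Iset x j)) ≤ py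
    exact bot_le
  · show ∃ y' : ↥(φ ⁻¹' Iset x j), (⟨⊥, _⟩ : ↥(φ ⁻¹' Iset x j)) ≤ y' ∧ φ (y' : α) ≤ (pw : β)
    refine ⟨⟨⊥, phi_bot_mem_Iset hgB hφ hbij hmono⟩, le_refl _, ?_⟩
    rw [phi_bot hφ]
    exact bot_le

lemma min_eq_botP {j : ℕ} {m : InterPoset φ x j} (hm : ∀ z, m ≤ z) :
    m = ⟨.inl ⟨⊥, phi_bot_mem_Iset hgB hφ hbij hmono⟩⟩ :=
  le_antisymm (hm _) (botP_le hgB hφ hbij hmono _)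

omit hφ in
lemma le_topP {j : ℕ} (hj : j < N) (p : InterPoset φ x j) :
    p ≤ ⟨.inr ⟨⊤, top_not_mem_Iset hgB hbij hmono hj⟩⟩ := by
  rcases p with ⟨py | pw⟩
  · exact ⟨py, le_refl _, le_top⟩
  · exact (le_top : (pw : β) ≤ ⊤)

omit hφ in
lemma eq_topP_of_ge {j : ℕ} (hj : j < N) {p : InterPoset φ x j}
    (hp : (⟨.inr ⟨⊤, top_not_mem_Iset hgB hbij hmono hj⟩⟩ : InterPoset φ x j) ≤ p) :
    p = ⟨.inr ⟨⊤, top_not_mem_Iset hgB hbij hmono hj⟩⟩ := by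
  rcases p with ⟨py | pw⟩
  · exact absurd hp (fun h => h)
  · have h1 : (⊤ : β) ≤ (pw : β) := hp
    have h2 : (pw : β) = ⊤ := le_antisymm le_top h1
    cases pw
    simp_all

omit hφ in
lemma rho_mem_Iset_le {j : ℕ} (hj : j < N) (hn : 1 ≤ n) {z : β} (hz : z ∈ Iset x j) :
    rho z ≤ n - 1 := by
  have hfin : (⟨j, Nat.lt_succ_of_lt hj⟩ : Fin (N + 1)) ≠ Fin.last N := by
    intro h
    have := congrArg Fin.val h
    simp at this
    omega
  have h1 : rho z ≤ rho (x ⟨j, Nat.lt_succ_of_lt hj⟩) := rho_le_of_mem_Iset hgB hbij hmono hz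
  have h2 : x ⟨j, Nat.lt_succ_of_lt hj⟩ ≠ ⊤ := by
    rw [← x_last_eq_top hgB hbij hmono]
    exact fun h => hfin (hbij.1 h)
  have h3 : rho (x ⟨j, Nat.lt_succ_of_lt hj⟩) < n := by
    have := rho_lt_of_lt (lt_top_iff_ne_top.2 h2)
    rwa [rho_top_of_graded hgB] at this
  omega

/-- The cover set of a lifted coatom is exactly the top element. -/
lemma covers_inl {j : ℕ} (hj : j < N) (hn : 1 ≤ n) (y' : ↥(φ ⁻¹' Iset x j))
    (h1 : rho (y' : α) = n - 1) (h2 : rho (φ (y' : α)) = n - 1) :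
    {z : InterPoset φ x j | (⟨.inl y'⟩ : InterPoset φ x j) ⋖ z}
      = {⟨.inr ⟨⊤, top_not_mem_Iset hgB hbij hmono hj⟩⟩} := by
  have hgt : ∀ p : InterPoset φ x j, (⟨.inl y'⟩ : InterPoset φ x j) < p →
      p = ⟨.inr ⟨⊤, top_not_mem_Iset hgB hbij hmono hj⟩⟩ := by
    intro p hp
    rcases p with ⟨py | pw⟩
    · exfalso
      have hle : y' ≤ py := hp.le
      have hne : y' ≠ py := by
        intro h
        rw [h] at hp
        exact lt_irrefl _ hp
      have hlt : (y' : α) < (py : α) :=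
        lt_of_le_of_ne hle (fun h => hne (Subtype.ext h))
      have h3 : n - 1 < rho (py : α) := h1 ▸ rho_lt_of_lt hlt
      have h4 : rho (py : α) ≤ rho (φ (py : α)) := hφ.2.1 _
      have h5 : rho (φ (py : α)) ≤ n - 1 := rho_mem_Iset_le hgB hbij hmono hj hn py.2
      omega
    · obtain ⟨y'', hy''1, hy''2⟩ := hp.le
      have h3 : rho (y' : α) ≤ rho (y'' : α) := rho_mono hy''1
      have h4 : rho (y'' : α) ≤ rho (φ (y'' : α)) := hφ.2.1 _
      have h5 : rho (φ (y'' : α)) ≤ n - 1 := rho_mem_Iset_le hgB hbij hmono hj hn y''.2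
      have h6 : φ (y' : α) ≤ φ (y'' : α) := hφ.1 hy''1
      have h7 : φ (y' : α) = φ (y'' : α) := eq_of_le_of_rho_le h6 (by omega)
      have h8 : φ (y'' : α) ≠ (pw : β) := fun h => pw.2 (h ▸ y''.2)
      have h9 : rho (φ (y'' : α)) < rho (pw : β) :=
        rho_lt_of_lt (lt_of_le_of_ne hy''2 h8)
      have h10 : rho (pw : β) ≤ n := rho_le_rank hgB _
      have h11 : (pw : β) = ⊤ := eq_top_of_rho_eq_rank hgB (by omega)
      cases pw
      simp_all
  have hlt : (⟨.inl y'⟩ : InterPoset φ x j)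
      < ⟨.inr ⟨⊤, top_not_mem_Iset hgB hbij hmono hj⟩⟩ := by
    refine lt_of_le_of_ne (le_topP hgB hbij hmono hj _) ?_
    intro h
    exact absurd (congrArg (fun p => (ExtP.elt p).isLeft) h) (by simp)
  ext p
  simp only [Set.mem_setOf_eq, Set.mem_singleton_iff]
  constructor
  · intro hcov
    exact hgt p hcov.lt
  · rintro rfl
    refine ⟨hlt, ?_⟩
    intro q hq1 hq2
    have := hgt q hq1
    subst this
    exact lt_irrefl _ hq2

omit hφ in
lemma covers_inr {j : ℕ} (hj : j < N) (hn : 1 ≤ n) (w : {v : β // v ∉ Iset x j})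
    (h1 : rho (w : β) = n - 1) :
    {z : InterPoset φ x j | (⟨.inr w⟩ : InterPoset φ x j) ⋖ z}
      = {⟨.inr ⟨⊤, top_not_mem_Iset hgB hbij hmono hj⟩⟩} := by
  have hwt : (w : β) ≠ ⊤ := by
    intro h
    have := rho_top_of_graded (α := β) hgB
    rw [h, this] at h1
    omega
  have hgt : ∀ p : InterPoset φ x j, (⟨.inr w⟩ : InterPoset φ x j) < p →
      p = ⟨.inr ⟨⊤, top_not_mem_Iset hgB hbij hmono hj⟩⟩ := by
    intro p hp
    rcases p with ⟨py | pw⟩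
    · exact absurd hp.le (fun h => h)
    · have hle : (w : β) ≤ (pw : β) := hp.le
      have hne : (w : β) ≠ (pw : β) := by
        intro h
        have : w = pw := Subtype.ext h
        rw [this] at hp
        exact lt_irrefl _ hp
      have h9 : rho (w : β) < rho (pw : β) := rho_lt_of_lt (lt_of_le_of_ne hle hne)
      have h10 : rho (pw : β) ≤ n := rho_le_rank hgB _
      have h11 : (pw : β) = ⊤ := eq_top_of_rho_eq_rank hgB (by omega)
      cases pw
      simp_all
  have hlt : (⟨.inr w⟩ : InterPoset φ x j)
      < ⟨.inr ⟨⊤, top_not_mem_Iset hgB hbij hmono hj⟩⟩ := by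
    refine lt_of_le_of_ne (le_topP hgB hbij hmono hj _) ?_
    intro h
    have : (w : β) = ⊤ := by
      have := congrArg (fR φ x j) h
      simpa [fR] using this
    exact hwt this
  ext p
  simp only [Set.mem_setOf_eq, Set.mem_singleton_iff]
  constructor
  · intro hcov
    exact hgt p hcov.lt
  · rintro rfl
    refine ⟨hlt, ?_⟩
    intro q hq1 hq2
    have := hgt q hq1
    subst this
    exact lt_irrefl _ hq2

/-- The boundary of the intermediate poset consists of everything except the top. -/
lemma boundary_inter {j : ℕ} (hj : j < N) (hn : 1 ≤ n) :
    boundary (InterPoset φ x j) n = {p : InterPoset φ x j | fR φ x j p ≠ ⊤} := by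
  have hTne : (⊥ : β) ≠ ⊤ := by
    intro h
    have h1 := rho_top_of_graded (α := β) hgB
    rw [← h, rho_bot] at h1
    omega
  have hfR : ∀ p : InterPoset φ x j, fR φ x j p = ⊤ →
      p = ⟨.inr ⟨⊤, top_not_mem_Iset hgB hbij hmono hj⟩⟩ := by
    intro p hp
    rcases p with ⟨py | pw⟩
    · exact absurd hp hTne
    · have : (pw : β) = ⊤ := hp
      cases pw
      simp_all
  ext p
  constructor
  · rintro ⟨-, x', -, hx'rho, hx'cov, hpx'⟩
    intro hfp
    have hptop := hfR p hfp
    subst hptop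
    have hx'top := eq_topP_of_ge hgB hbij hmono hj hpx'
    subst hx'top
    rw [rho_inr hgB hφ hbij hmono, rho_top_of_graded (α := β) hgB] at hx'rho
    omega
  · intro hfp
    rcases p with ⟨py | pw⟩
    · -- p = inl y
      have hyt : φ (py : α) ≠ ⊤ := fun h =>
        top_not_mem_Iset hgB hbij hmono hj (h ▸ py.2)
      obtain ⟨w, hw1, hw2, hw3⟩ := exists_coatom_above hgB hyt
      by_cases hwG : w ∈ Iset x j
      · obtain ⟨y2, hy21, hy22, hy23⟩ := hφ.2.2.2.1 (py : α) w hw1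
        have hy2G : y2 ∈ φ ⁻¹' Iset x j := by
          rw [Set.mem_preimage, hy22]; exact hwG
        refine ⟨Set.mem_univ _, ⟨.inl ⟨y2, hy2G⟩⟩, Set.mem_univ _, ?_, ?_, ?_⟩
        · rw [rho_inl hgB hφ hbij hmono]
          rw [hy23, hw2]
        · rw [Set.sep_univ]
          rw [covers_inl hgB hφ hbij hmono hj hn _ (by rw [hy23, hw2]) (by rw [hy22, hw2])]
          simp
        · exact (hy21 : py ≤ ⟨y2, hy2G⟩)
      · refine ⟨Set.mem_univ _, ⟨.inr ⟨w, hwG⟩⟩, Set.mem_univ _, ?_, ?_, ?_⟩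
        · rw [rho_inr hgB hφ hbij hmono]
          exact hw2
        · rw [Set.sep_univ]
          rw [covers_inr hgB hbij hmono hj hn _ hw2]
          simp
        · exact ⟨py, le_refl _, hw1⟩
    · -- p = inr v
      have hvt : (pw : β) ≠ ⊤ := hfp
      obtain ⟨w, hw1, hw2, hw3⟩ := exists_coatom_above hgB hvt
      have hwG : w ∉ Iset x j := by
        intro h
        exact pw.2 (Iset_lower hgB hbij hmono h hw1)
      refine ⟨Set.mem_univ _, ⟨.inr ⟨w, hwG⟩⟩, Set.mem_univ _, ?_, ?_, ?_⟩
      · rw [rho_inr hgB hφ hbij hmono]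
        exact hw2
      · rw [Set.sep_univ]
        rw [covers_inr hgB hbij hmono hj hn _ hw2]
        simp
      · exact (hw1 : (pw : β) ≤ w)

end BoundaryFacts

section UWord
variable (K : Type) [Field K] [CharZero K]

lemma uWord_congr {m : ℕ} {S T : Set ℕ}
    (h : ∀ k, 1 ≤ k → k ≤ m → (k ∈ S ↔ k ∈ T)) : uWord K m S = uWord K m T := by
  unfold uWord
  have hf : (fun i : Fin m => if (i : ℕ) + 1 ∈ S then lb K else la K)
      = (fun i : Fin m => if (i : ℕ) + 1 ∈ T then lb K else la K) := by
    funext i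
    rw [show ((i : ℕ) + 1 ∈ S) = ((i : ℕ) + 1 ∈ T) from
      propext (h _ (by omega) (by omega))]
  rw [hf]

lemma uWord_append (p q : ℕ) (S : Set ℕ) :
    uWord K (p + q) S = uWord K p S * uWord K q {m | m + p ∈ S} := by
  unfold uWord
  rw [List.ofFn_add, List.prod_append]
  have hf1 : (fun i : Fin p => if ((Fin.castLE (Nat.le_add_right p q) i : Fin (p + q)) : ℕ) + 1 ∈ S
        then lb K else la K)
      = (fun i : Fin p => if (i : ℕ) + 1 ∈ S then lb K else la K) := by
    funext i
    simp
  have hf2 : (fun i : Fin q => if ((Fin.natAdd p i : Fin (p + q)) : ℕ) + 1 ∈ S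
        then lb K else la K)
      = (fun i : Fin q => if (i : ℕ) + 1 ∈ {m | m + p ∈ S} then lb K else la K) := by
    funext i
    have h2 : ((Fin.natAdd p i : Fin (p + q)) : ℕ) + 1 ∈ S ↔ (i : ℕ) + 1 + p ∈ S := by
      rw [show ((Fin.natAdd p i : Fin (p + q)) : ℕ) + 1 = (i : ℕ) + 1 + p by
        simp [Fin.natAdd]; omega]
    rw [show (((Fin.natAdd p i : Fin (p + q)) : ℕ) + 1 ∈ S)
      = ((i : ℕ) + 1 ∈ {m | m + p ∈ S}) from propext h2]
  rw [hf1, hf2]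

lemma uWord_one (S : Set ℕ) : uWord K 1 S = if 1 ∈ S then lb K else la K := by
  unfold uWord
  simp

lemma uWord_split_last {m : ℕ} (hm : 1 ≤ m) (S : Set ℕ) :
    uWord K m S = uWord K (m - 1) S * (if m ∈ S then lb K else la K) := by
  conv_lhs => rw [show m = (m - 1) + 1 by omega]
  rw [uWord_append, uWord_one]
  rw [show (1 ∈ {m' | m' + (m - 1) ∈ S}) = (m ∈ S) by
    show (1 + (m - 1) ∈ S) = (m ∈ S)
    rw [show 1 + (m - 1) = m by omega]]

end UWord

instance finsetFinite {γ : Type} [Finite γ] : Finite (Finset γ) := by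
  have := Fintype.ofFinite γ
  infer_instance

section Assembly
variable (K : Type) [Field K] [CharZero K]
variable [PartialOrder α] [Finite α] [OrderBot α]
  [PartialOrder β] [Finite β] [OrderBot β] [OrderTop β] {n N : ℕ}
  {φ : α → β} {x : Fin (N + 1) → β}
  (hgB : IsGradedOfRank β n) (hφ : IsSFS φ)
  (hbij : Function.Bijective x)
  (hmono : ∀ i j : Fin (N + 1), i ≤ j → rho (x i) ≤ rho (x j))

include hgB hφ hbij hmono

omit hφ in
lemma bot_ne_top_beta (hn : 1 ≤ n) : (⊥ : β) ≠ ⊤ := by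
  intro h
  have h1 := rho_top_of_graded (α := β) hgB
  rw [← h, rho_bot] at h1
  omega

/-- First sum: chains in `∂B_i` through the fiber of `x_i`. -/
lemma sum1_eq (iF : Fin (N + 1)) (hi1 : 1 ≤ (iF : ℕ)) (hi2 : (iF : ℕ) < N) (hn : 1 ≤ n) :
    (∑ᶠ C ∈ {C ∈ chainsMin (boundary (InterPoset φ x (iF : ℕ)) n) |
        ∃ y : ↥(φ ⁻¹' Iset x (iF : ℕ)),
          (⟨.inl y⟩ : InterPoset φ x (iF : ℕ)) ∈ C ∧ φ (y : α) = x iF},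
      uWord K (n - 1) (rho '' (C : Set (InterPoset φ x (iF : ℕ)))))
    = (∑ d ∈ ((Set.toFinite (chainsIn (φ ⁻¹' Set.Iic (x iF)) (⊥ : α))).toFinset.filter
          (fun d => ∃ a ∈ d, φ a = x iF)),
        uWord K (rho (x iF)) (rho '' (d : Set α)))
      * (∑ e ∈ (Set.toFinite {e : Finset β | (e : Set β) ⊆ Set.Ioo (x iF) ⊤ ∧
            IsChain (· ≤ ·) (e : Set β)}).toFinset,
          uWord K (n - rho (x iF) - 1) {k | k + rho (x iF) ∈ rho '' (e : Set β)}) := by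
  have hρn : rho (x iF) ≤ n - 1 :=
    rho_mem_Iset_le hgB hbij hmono hi2 hn (mem_Iset_self hgB hbij hmono iF)
  have hIic : Set.Iic (x iF) ⊆ Iset x (iF : ℕ) := Iic_subset_Iset hgB hbij hmono iF
  have hnotmem : ∀ b : β, x iF < b → b ∉ Iset x (iF : ℕ) := by
    intro b hb hmem
    exact absurd (rho_le_of_mem_Iset hgB hbij hmono hmem) (Nat.not_le.2 (rho_lt_of_lt hb))
  rw [finsum_mem_eq_finite_toFinset_sum _ (Set.toFinite _), Finset.sum_mul_sum,
    ← Finset.sum_product']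
  apply Finset.sum_bij' (i := fun C _ => (projL (iF : ℕ) C, projR (iF : ℕ) C))
    (j := fun de _ => glue φ x (iF : ℕ) de.1 de.2)
  -- hi : forward map lands in the product set
  · intro C hC
    rw [Set.Finite.mem_toFinset] at hC
    obtain ⟨⟨hC1, hC2, hC3⟩, y₀, hy₀C, hy₀φ⟩ := hC
    rw [boundary_inter hgB hφ hbij hmono hi2 hn] at hC1
    obtain ⟨m0, hm0C, hm0min⟩ := hC3
    have hbot := min_eq_botP hgB hφ hbij hmono hm0min ▸ hm0C
    have hfibgt : ∀ (w : {v : β // v ∉ Iset x (iF : ℕ)}),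
        (⟨.inr w⟩ : InterPoset φ x (iF : ℕ)) ∈ C → x iF < (w : β) := by
      intro w hwC
      have hne : (⟨.inl y₀⟩ : InterPoset φ x (iF : ℕ)) ≠ ⟨.inr w⟩ := by
        intro h
        simpa using congrArg (fun p => (ExtP.elt p).isLeft) h
      rcases hC2 hy₀C hwC hne with h | h
      · obtain ⟨y', h1, h2⟩ := h
        have h3 : x iF ≤ (w : β) := by
          calc x iF = φ (y₀ : α) := hy₀φ.symm
          _ ≤ φ (y' : α) := hφ.1 h1
          _ ≤ (w : β) := h2
        refine lt_of_le_of_ne h3 ?_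
        intro h4
        exact w.2 (h4 ▸ mem_Iset_self hgB hbij hmono iF)
      · exact absurd h (fun hh => hh)
    have hdle : ∀ (a : α) (h : φ a ∈ Iset x (iF : ℕ)),
        (⟨.inl ⟨a, h⟩⟩ : InterPoset φ x (iF : ℕ)) ∈ C → φ a ≤ x iF := by
      intro a h haC
      by_cases heq : (⟨.inl ⟨a, h⟩⟩ : InterPoset φ x (iF : ℕ)) = ⟨.inl y₀⟩
      · have : a = (y₀ : α) := by
          have := congrArg (fL φ x (iF : ℕ)) heq
          simpa [fL] using this
        rw [this, hy₀φ]
      · rcases hC2 haC hy₀C heq with hcc | hcc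
        · have h1 : a ≤ (y₀ : α) := hcc
          rw [← hy₀φ]
          exact hφ.1 h1
        · have h1 : (y₀ : α) ≤ a := hcc
          have h2 : x iF ≤ φ a := hy₀φ ▸ hφ.1 h1
          exact (eq_of_mem_Iset_of_le hgB hbij hmono h h2).le
    rw [Finset.mem_product]
    constructor
    · rw [Finset.mem_filter]
      constructor
      · rw [Set.Finite.mem_toFinset]
        refine ⟨?_, projL_chain hC2, ?_⟩
        · intro a ha
          obtain ⟨h, hmem⟩ := mem_projL.1 (Finset.mem_coe.1 ha)
          exact hdle a h hmem
        · exact mem_projL.2 ⟨phi_bot_mem_Iset hgB hφ hbij hmono, hbot⟩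
      · exact ⟨(y₀ : α), mem_projL.2 ⟨y₀.2, hy₀C⟩, hy₀φ⟩
    · rw [Set.Finite.mem_toFinset]
      refine ⟨?_, projR_chain hC2⟩
      intro b hb
      obtain ⟨h, hmem⟩ := mem_projR.1 (Finset.mem_coe.1 hb)
      refine ⟨hfibgt _ hmem, lt_top_iff_ne_top.2 ?_⟩
      exact hC1 hmem
  -- hj : backward map lands in the chain set
  · rintro ⟨d, e⟩ hde
    rw [Finset.mem_product] at hde
    obtain ⟨hd, he⟩ := hde
    rw [Finset.mem_filter, Set.Finite.mem_toFinset] at hd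
    rw [Set.Finite.mem_toFinset] at he
    obtain ⟨⟨hd1, hd2, hd3⟩, a₀, ha₀d, ha₀φ⟩ := hd
    obtain ⟨he1, he2⟩ := he
    have hdG : ∀ a ∈ d, φ a ∈ Iset x (iF : ℕ) := fun a ha => hIic (hd1 ha)
    obtain ⟨m, hm, hmax⟩ := chain_exists_greatest hd2 ⟨a₀, ha₀d⟩
    have hφm : φ m = x iF := by
      refine le_antisymm (hd1 (Finset.mem_coe.2 hm)) ?_
      rw [← ha₀φ]
      exact hφ.1 (hmax a₀ ha₀d)
    rw [Set.Finite.mem_toFinset]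
    refine ⟨⟨?_, ?_, ?_⟩, ?_⟩
    · rw [boundary_inter hgB hφ hbij hmono hi2 hn]
      intro p hp
      have hp' := mem_glue.1 (Finset.mem_coe.1 hp)
      rcases p with ⟨py | pw⟩
      · exact bot_ne_top_beta hgB hbij hmono hn
      · have hb : (pw : β) ∈ e := hp'
        exact ((he1 hb).2).ne
    · apply glue_chain hd2 he2
      intro a ha b hb
      refine ⟨m, hmax a ha, hdG m hm, ?_⟩
      rw [hφm]
      exact (he1 hb).1.le
    · refine ⟨⟨.inl ⟨⊥, phi_bot_mem_Iset hgB hφ hbij hmono⟩⟩, ?_,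
        botP_le hgB hφ hbij hmono⟩
      exact mem_glue_inl.2 hd3
    · exact ⟨⟨a₀, hdG _ ha₀d⟩, mem_glue_inl.2 ha₀d, ha₀φ⟩
  -- left inverse
  · intro C hC
    exact glue_proj C
  -- right inverse
  · rintro ⟨d, e⟩ hde
    rw [Finset.mem_product] at hde
    obtain ⟨hd, he⟩ := hde
    rw [Finset.mem_filter, Set.Finite.mem_toFinset] at hd
    rw [Set.Finite.mem_toFinset] at he
    obtain ⟨⟨hd1, hd2, hd3⟩, -⟩ := hd
    obtain ⟨he1, he2⟩ := he
    have : projL (iF : ℕ) (glue φ x (iF : ℕ) d e) = d :=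
      projL_glue (fun a ha => hIic (hd1 ha))
    have h2 : projR (iF : ℕ) (glue φ x (iF : ℕ) d e) = e :=
      projR_glue (fun b hb => hnotmem b (he1 hb).1)
    simp [this, h2]
  -- values agree
  · intro C hC
    rw [Set.Finite.mem_toFinset] at hC
    obtain ⟨⟨hC1, hC2, hC3⟩, y₀, hy₀C, hy₀φ⟩ := hC
    rw [boundary_inter hgB hφ hbij hmono hi2 hn] at hC1
    have hfibgt : ∀ (w : {v : β // v ∉ Iset x (iF : ℕ)}),
        (⟨.inr w⟩ : InterPoset φ x (iF : ℕ)) ∈ C → x iF < (w : β) := by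
      intro w hwC
      have hne : (⟨.inl y₀⟩ : InterPoset φ x (iF : ℕ)) ≠ ⟨.inr w⟩ := by
        intro h
        simpa using congrArg (fun p => (ExtP.elt p).isLeft) h
      rcases hC2 hy₀C hwC hne with h | h
      · obtain ⟨y', h1, h2⟩ := h
        have h3 : x iF ≤ (w : β) := by
          calc x iF = φ (y₀ : α) := hy₀φ.symm
          _ ≤ φ (y' : α) := hφ.1 h1
          _ ≤ (w : β) := h2
        refine lt_of_le_of_ne h3 ?_
        intro h4
        exact w.2 (h4 ▸ mem_Iset_self hgB hbij hmono iF)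
      · exact absurd h (fun hh => hh)
    have hdle : ∀ (a : α) (h : φ a ∈ Iset x (iF : ℕ)),
        (⟨.inl ⟨a, h⟩⟩ : InterPoset φ x (iF : ℕ)) ∈ C → φ a ≤ x iF := by
      intro a h haC
      by_cases heq : (⟨.inl ⟨a, h⟩⟩ : InterPoset φ x (iF : ℕ)) = ⟨.inl y₀⟩
      · have : a = (y₀ : α) := by
          have := congrArg (fL φ x (iF : ℕ)) heq
          simpa [fL] using this
        rw [this, hy₀φ]
      · rcases hC2 haC hy₀C heq with hcc | hcc
        · have h1 : a ≤ (y₀ : α) := hcc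
          rw [← hy₀φ]
          exact hφ.1 h1
        · have h1 : (y₀ : α) ≤ a := hcc
          have h2 : x iF ≤ φ a := hy₀φ ▸ hφ.1 h1
          exact (eq_of_mem_Iset_of_le hgB hbij hmono h h2).le
    have hunion : rho '' (C : Set (InterPoset φ x (iF : ℕ)))
        = rho '' ((projL (iF : ℕ) C : Finset α) : Set α)
          ∪ rho '' ((projR (iF : ℕ) C : Finset β) : Set β) := by
      ext k
      constructor
      · rintro ⟨p, hpC, hpk⟩
        rcases p with ⟨py | pw⟩
        · left
          refine ⟨(py : α), mem_projL.2 ⟨py.2, hpC⟩, ?_⟩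
          rw [← rho_inl hgB hφ hbij hmono py]
          exact hpk
        · right
          refine ⟨(pw : β), mem_projR.2 ⟨pw.2, hpC⟩, ?_⟩
          rw [← rho_inr hgB hφ hbij hmono pw]
          exact hpk
      · rintro (⟨a, ham, hak⟩ | ⟨b, hbm, hbk⟩)
        · obtain ⟨h, hmem⟩ := mem_projL.1 (Finset.mem_coe.1 ham)
          exact ⟨_, hmem, by rw [rho_inl hgB hφ hbij hmono]; exact hak⟩
        · obtain ⟨h, hmem⟩ := mem_projR.1 (Finset.mem_coe.1 hbm)
          exact ⟨_, hmem, by rw [rho_inr hgB hφ hbij hmono]; exact hbk⟩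
    have hboundL : ∀ k ∈ rho '' ((projL (iF : ℕ) C : Finset α) : Set α),
        k ≤ rho (x iF) := by
      rintro k ⟨a, ham, hak⟩
      obtain ⟨h, hmem⟩ := mem_projL.1 (Finset.mem_coe.1 ham)
      have h1 : rho a ≤ rho (φ a) := hφ.2.1 a
      have h2 : rho (φ a) ≤ rho (x iF) := rho_mono (hdle a h hmem)
      omega
    have hboundR : ∀ k ∈ rho '' ((projR (iF : ℕ) C : Finset β) : Set β),
        rho (x iF) < k := by
      rintro k ⟨b, hbm, hbk⟩
      obtain ⟨h, hmem⟩ := mem_projR.1 (Finset.mem_coe.1 hbm)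
      rw [← hbk]
      exact rho_lt_of_lt (hfibgt _ hmem)
    rw [hunion, show n - 1 = rho (x iF) + (n - rho (x iF) - 1) by omega, uWord_append]
    congr 1
    · apply uWord_congr
      intro k h1 h2
      constructor
      · rintro (h | h)
        · exact h
        · exact absurd (hboundR k h) (by omega)
      · exact Or.inl
    · apply uWord_congr
      intro k h1 h2
      constructor
      · rintro (h | h)
        · exact absurd (hboundL _ h) (by omega)
        · exact h
      · exact Or.inr

/-- Second sum: chains in `∂B_{i-1}` through `x_i`. -/
lemma sum2_eq (iF : Fin (N + 1)) (hi1 : 1 ≤ (iF : ℕ)) (hi2 : (iF : ℕ) < N) (hn : 1 ≤ n) :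
    (∑ᶠ C ∈ {C ∈ chainsMin (boundary (InterPoset φ x ((iF : ℕ) - 1)) n) |
        ∃ w : {v : β // v ∉ Iset x ((iF : ℕ) - 1)},
          (⟨.inr w⟩ : InterPoset φ x ((iF : ℕ) - 1)) ∈ C ∧ (w : β) = x iF},
      uWord K (n - 1) (rho '' (C : Set (InterPoset φ x ((iF : ℕ) - 1)))))
    = (∑ d ∈ (Set.toFinite (chainsIn (φ ⁻¹' Set.Iio (x iF)) (⊥ : α))).toFinset,
        uWord K (rho (x iF) - 1) (rho '' (d : Set α)))
      * (lb K * (∑ e ∈ (Set.toFinite {e : Finset β | (e : Set β) ⊆ Set.Ioo (x iF) ⊤ ∧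
            IsChain (· ≤ ·) (e : Set β)}).toFinset,
          uWord K (n - rho (x iF) - 1) {k | k + rho (x iF) ∈ rho '' (e : Set β)})) := by
  have hj' : (iF : ℕ) - 1 < N := by omega
  have hρ1 : 1 ≤ rho (x iF) := by
    by_contra h
    have h0 : rho (x iF) = 0 := by omega
    have hb : x iF = ⊥ := eq_bot_of_rho_eq_zero h0
    have h1 : x iF = x 0 := by rw [hb, x_zero_eq_bot hgB hbij hmono]
    have := hbij.1 h1
    rw [this] at hi1
    simp at hi1
  have hρn : rho (x iF) ≤ n - 1 :=
    rho_mem_Iset_le hgB hbij hmono hi2 hn (mem_Iset_self hgB hbij hmono iF)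
  have hξnot : x iF ∉ Iset x ((iF : ℕ) - 1) := not_mem_Iset_pred hgB hbij hmono hi1
  have hIio : Set.Iio (x iF) ⊆ Iset x ((iF : ℕ) - 1) :=
    Iio_subset_Iset_pred hgB hbij hmono hi1
  have hξtop : x iF ≠ ⊤ := by
    intro h
    rw [h, rho_top_of_graded hgB] at hρn
    omega
  have hnotmem : ∀ b : β, x iF < b → b ∉ Iset x ((iF : ℕ) - 1) := by
    intro b hb hmem
    have h1 : rho b ≤ rho (x (⟨(iF : ℕ) - 1, by omega⟩ : Fin (N + 1))) :=
      rho_le_of_mem_Iset hgB hbij hmono hmem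
    have h2 : rho (x (⟨(iF : ℕ) - 1, by omega⟩ : Fin (N + 1))) ≤ rho (x iF) :=
      hmono _ _ (by rw [Fin.le_def]; exact Nat.sub_le _ _)
    exact absurd (rho_lt_of_lt hb) (by omega)
  rw [finsum_mem_eq_finite_toFinset_sum _ (Set.toFinite _), Finset.mul_sum,
    Finset.sum_mul_sum, ← Finset.sum_product']
  apply Finset.sum_bij'
    (i := fun C _ => (projL ((iF : ℕ) - 1) C, (projR ((iF : ℕ) - 1) C).erase (x iF)))
    (j := fun de _ => glue φ x ((iF : ℕ) - 1) de.1 (insert (x iF) de.2))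
  -- hi : forward map lands in the product set
  · intro C hC
    rw [Set.Finite.mem_toFinset] at hC
    obtain ⟨⟨hC1, hC2, hC3⟩, w₀, hw₀C, hw₀v⟩ := hC
    rw [boundary_inter hgB hφ hbij hmono hj' hn] at hC1
    obtain ⟨m0, hm0C, hm0min⟩ := hC3
    have hbot := min_eq_botP hgB hφ hbij hmono hm0min ▸ hm0C
    have hw₀ : w₀ = ⟨x iF, hξnot⟩ := Subtype.ext hw₀v
    rw [hw₀] at hw₀C
    have hdlt : ∀ (a : α) (h : φ a ∈ Iset x ((iF : ℕ) - 1)),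
        (⟨.inl ⟨a, h⟩⟩ : InterPoset φ x ((iF : ℕ) - 1)) ∈ C → φ a < x iF := by
      intro a h haC
      have hne : (⟨.inl ⟨a, h⟩⟩ : InterPoset φ x ((iF : ℕ) - 1))
          ≠ ⟨.inr ⟨x iF, hξnot⟩⟩ := by
        intro hh
        simpa using congrArg (fun p => (ExtP.elt p).isLeft) hh
      rcases hC2 haC hw₀C hne with hcc | hcc
      · obtain ⟨y', h1, h2⟩ := hcc
        have h3 : φ (y' : α) ≠ x iF := fun hh => hξnot (hh ▸ y'.2)
        have h4 : φ a ≤ φ (y' : α) := hφ.1 h1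
        exact lt_of_le_of_lt h4 (lt_of_le_of_ne h2 h3)
      · exact absurd hcc (fun hh => hh)
    have hgtR : ∀ (b : β) (h : b ∉ Iset x ((iF : ℕ) - 1)),
        (⟨.inr ⟨b, h⟩⟩ : InterPoset φ x ((iF : ℕ) - 1)) ∈ C → b ≠ x iF → x iF < b := by
      intro b h hbC hbne
      have hne : (⟨.inr ⟨b, h⟩⟩ : InterPoset φ x ((iF : ℕ) - 1))
          ≠ ⟨.inr ⟨x iF, hξnot⟩⟩ := by
        intro hh
        have := congrArg (fR φ x ((iF : ℕ) - 1)) hh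
        simp [fR] at this
        exact hbne this
      rcases hC2 hbC hw₀C hne with hcc | hcc
      · have h1 : b ≤ x iF := hcc
        exact absurd (hIio (lt_of_le_of_ne h1 hbne)) h
      · have h1 : x iF ≤ b := hcc
        exact lt_of_le_of_ne h1 (fun hh => hbne hh.symm)
    rw [Finset.mem_product]
    constructor
    · rw [Set.Finite.mem_toFinset]
      refine ⟨?_, projL_chain hC2, ?_⟩
      · intro a ha
        obtain ⟨h, hmem⟩ := mem_projL.1 (Finset.mem_coe.1 ha)
        exact hdlt a h hmem
      · exact mem_projL.2 ⟨phi_bot_mem_Iset hgB hφ hbij hmono, hbot⟩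
    · rw [Set.Finite.mem_toFinset]
      refine ⟨?_, isChain_anti (Finset.coe_subset.2 (Finset.erase_subset _ _))
        (projR_chain hC2)⟩
      intro b hb
      obtain ⟨hbne, hbm⟩ := Finset.mem_erase.1 (Finset.mem_coe.1 hb)
      obtain ⟨h, hmem⟩ := mem_projR.1 hbm
      refine ⟨hgtR b h hmem hbne, lt_top_iff_ne_top.2 ?_⟩
      exact hC1 hmem
  -- hj : backward map lands in the chain set
  · rintro ⟨d, e⟩ hde
    rw [Finset.mem_product] at hde
    obtain ⟨hd, he⟩ := hde
    rw [Set.Finite.mem_toFinset] at hd he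
    obtain ⟨hd1, hd2, hd3⟩ := hd
    obtain ⟨he1, he2⟩ := he
    have hdG : ∀ a ∈ d, φ a ∈ Iset x ((iF : ℕ) - 1) := fun a ha => hIio (hd1 ha)
    have hins : ∀ b ∈ insert (x iF) e, b ∉ Iset x ((iF : ℕ) - 1) := by
      intro b hb
      rcases Finset.mem_insert.1 hb with rfl | hb'
      · exact hξnot
      · exact hnotmem b (he1 hb').1
    have hinsc : IsChain (· ≤ ·) ((insert (x iF) e : Finset β) : Set β) := by
      rw [Finset.coe_insert]
      exact he2.insert (fun b hb _ => Or.inl (he1 hb).1.le)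
    rw [Set.Finite.mem_toFinset]
    refine ⟨⟨?_, ?_, ?_⟩, ?_⟩
    · rw [boundary_inter hgB hφ hbij hmono hj' hn]
      intro p hp
      have hp' := mem_glue.1 (Finset.mem_coe.1 hp)
      rcases p with ⟨py | pw⟩
      · exact bot_ne_top_beta hgB hbij hmono hn
      · have hb : (pw : β) ∈ insert (x iF) e := hp'
        rcases Finset.mem_insert.1 hb with hb' | hb'
        · intro hh
          exact hξtop (hb'.symm.trans hh)
        · exact ((he1 hb').2).ne
    · apply glue_chain hd2 hinsc
      intro a ha b hb
      refine ⟨a, le_refl _, hdG a ha, ?_⟩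
      rcases Finset.mem_insert.1 hb with rfl | hb'
      · exact (hd1 ha).le
      · exact le_trans (hd1 ha).le (he1 hb').1.le
    · refine ⟨⟨.inl ⟨⊥, phi_bot_mem_Iset hgB hφ hbij hmono⟩⟩, ?_,
        botP_le hgB hφ hbij hmono⟩
      exact mem_glue_inl.2 hd3
    · exact ⟨⟨x iF, hξnot⟩, mem_glue_inr.2 (Finset.mem_insert_self _ _), rfl⟩
  -- left inverse
  · intro C hC
    rw [Set.Finite.mem_toFinset] at hC
    obtain ⟨⟨hC1, hC2, hC3⟩, w₀, hw₀C, hw₀v⟩ := hC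
    have hw₀ : w₀ = ⟨x iF, hξnot⟩ := Subtype.ext hw₀v
    rw [hw₀] at hw₀C
    have hmemR : x iF ∈ projR ((iF : ℕ) - 1) C := mem_projR.2 ⟨hξnot, hw₀C⟩
    rw [Finset.insert_erase hmemR]
    exact glue_proj C
  -- right inverse
  · rintro ⟨d, e⟩ hde
    rw [Finset.mem_product] at hde
    obtain ⟨hd, he⟩ := hde
    rw [Set.Finite.mem_toFinset] at hd he
    obtain ⟨hd1, hd2, hd3⟩ := hd
    obtain ⟨he1, he2⟩ := he
    have hdG : ∀ a ∈ d, φ a ∈ Iset x ((iF : ℕ) - 1) := fun a ha => hIio (hd1 ha)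
    have hins : ∀ b ∈ insert (x iF) e, b ∉ Iset x ((iF : ℕ) - 1) := by
      intro b hb
      rcases Finset.mem_insert.1 hb with rfl | hb'
      · exact hξnot
      · exact hnotmem b (he1 hb').1
    have h1 : projL ((iF : ℕ) - 1) (glue φ x ((iF : ℕ) - 1) d (insert (x iF) e)) = d :=
      projL_glue hdG
    have h2 : projR ((iF : ℕ) - 1) (glue φ x ((iF : ℕ) - 1) d (insert (x iF) e))
        = insert (x iF) e := projR_glue hins
    have hxe : x iF ∉ e := fun h => lt_irrefl _ (he1 h).1
    simp [h1, h2, Finset.erase_insert hxe]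
  -- values agree
  · intro C hC
    show uWord K (n - 1) (rho '' (C : Set (InterPoset φ x ((iF : ℕ) - 1))))
      = uWord K (rho (x iF) - 1) (rho '' ((projL ((iF : ℕ) - 1) C : Finset α) : Set α))
        * (lb K * uWord K (n - rho (x iF) - 1)
          {k | k + rho (x iF) ∈
            rho '' (((projR ((iF : ℕ) - 1) C).erase (x iF) : Finset β) : Set β)})
    rw [Set.Finite.mem_toFinset] at hC
    obtain ⟨⟨hC1, hC2, hC3⟩, w₀, hw₀C, hw₀v⟩ := hC
    rw [boundary_inter hgB hφ hbij hmono hj' hn] at hC1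
    have hw₀ : w₀ = ⟨x iF, hξnot⟩ := Subtype.ext hw₀v
    rw [hw₀] at hw₀C
    have hdlt : ∀ (a : α) (h : φ a ∈ Iset x ((iF : ℕ) - 1)),
        (⟨.inl ⟨a, h⟩⟩ : InterPoset φ x ((iF : ℕ) - 1)) ∈ C → φ a < x iF := by
      intro a h haC
      have hne : (⟨.inl ⟨a, h⟩⟩ : InterPoset φ x ((iF : ℕ) - 1))
          ≠ ⟨.inr ⟨x iF, hξnot⟩⟩ := by
        intro hh
        simpa using congrArg (fun p => (ExtP.elt p).isLeft) hh
      rcases hC2 haC hw₀C hne with hcc | hcc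
      · obtain ⟨y', h1, h2⟩ := hcc
        have h3 : φ (y' : α) ≠ x iF := fun hh => hξnot (hh ▸ y'.2)
        have h4 : φ a ≤ φ (y' : α) := hφ.1 h1
        exact lt_of_le_of_lt h4 (lt_of_le_of_ne h2 h3)
      · exact absurd hcc (fun hh => hh)
    have hgtR : ∀ (b : β) (h : b ∉ Iset x ((iF : ℕ) - 1)),
        (⟨.inr ⟨b, h⟩⟩ : InterPoset φ x ((iF : ℕ) - 1)) ∈ C → b ≠ x iF → x iF < b := by
      intro b h hbC hbne
      have hne : (⟨.inr ⟨b, h⟩⟩ : InterPoset φ x ((iF : ℕ) - 1))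
          ≠ ⟨.inr ⟨x iF, hξnot⟩⟩ := by
        intro hh
        have := congrArg (fR φ x ((iF : ℕ) - 1)) hh
        simp [fR] at this
        exact hbne this
      rcases hC2 hbC hw₀C hne with hcc | hcc
      · have h1 : b ≤ x iF := hcc
        exact absurd (hIio (lt_of_le_of_ne h1 hbne)) h
      · have h1 : x iF ≤ b := hcc
        exact lt_of_le_of_ne h1 (fun hh => hbne hh.symm)
    have hunion : rho '' (C : Set (InterPoset φ x ((iF : ℕ) - 1)))
        = rho '' ((projL ((iF : ℕ) - 1) C : Finset α) : Set α)
          ∪ rho '' ((projR ((iF : ℕ) - 1) C : Finset β) : Set β) := by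
      ext k
      constructor
      · rintro ⟨p, hpC, hpk⟩
        rcases p with ⟨py | pw⟩
        · left
          refine ⟨(py : α), mem_projL.2 ⟨py.2, hpC⟩, ?_⟩
          rw [← rho_inl hgB hφ hbij hmono py]
          exact hpk
        · right
          refine ⟨(pw : β), mem_projR.2 ⟨pw.2, hpC⟩, ?_⟩
          rw [← rho_inr hgB hφ hbij hmono pw]
          exact hpk
      · rintro (⟨a, ham, hak⟩ | ⟨b, hbm, hbk⟩)
        · obtain ⟨h, hmem⟩ := mem_projL.1 (Finset.mem_coe.1 ham)
          exact ⟨_, hmem, by rw [rho_inl hgB hφ hbij hmono]; exact hak⟩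
        · obtain ⟨h, hmem⟩ := mem_projR.1 (Finset.mem_coe.1 hbm)
          exact ⟨_, hmem, by rw [rho_inr hgB hφ hbij hmono]; exact hbk⟩
    have hboundL : ∀ k ∈ rho '' ((projL ((iF : ℕ) - 1) C : Finset α) : Set α),
        k ≤ rho (x iF) - 1 := by
      rintro k ⟨a, ham, hak⟩
      obtain ⟨h, hmem⟩ := mem_projL.1 (Finset.mem_coe.1 ham)
      have h1 : rho a ≤ rho (φ a) := hφ.2.1 a
      have h2 : rho (φ a) < rho (x iF) := rho_lt_of_lt (hdlt a h hmem)
      omega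
    have hboundR : ∀ k ∈ rho '' ((projR ((iF : ℕ) - 1) C : Finset β) : Set β),
        rho (x iF) ≤ k := by
      rintro k ⟨b, hbm, hbk⟩
      obtain ⟨h, hmem⟩ := mem_projR.1 (Finset.mem_coe.1 hbm)
      by_cases hbe : b = x iF
      · rw [← hbk, hbe]
      · exact le_of_lt (hbk ▸ rho_lt_of_lt (hgtR b h hmem hbe))
    have hmemR : x iF ∈ projR ((iF : ℕ) - 1) C := mem_projR.2 ⟨hξnot, hw₀C⟩
    have hρS : rho (x iF) ∈ rho '' ((projR ((iF : ℕ) - 1) C : Finset β) : Set β) :=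
      ⟨x iF, Finset.mem_coe.2 hmemR, rfl⟩
    have heraseR : ∀ k, 1 ≤ k →
        ((k + rho (x iF) ∈ rho '' ((projR ((iF : ℕ) - 1) C : Finset β) : Set β))
        ↔ (k + rho (x iF) ∈
          rho '' (((projR ((iF : ℕ) - 1) C).erase (x iF) : Finset β) : Set β))) := by
      intro k hk
      constructor
      · rintro ⟨b, hbm, hbk⟩
        have hbne : b ≠ x iF := by
          intro hh
          rw [hh] at hbk
          omega
        exact ⟨b, Finset.mem_coe.2 (Finset.mem_erase.2 ⟨hbne, Finset.mem_coe.1 hbm⟩), hbk⟩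
      · rintro ⟨b, hbm, hbk⟩
        obtain ⟨hbne, hbm'⟩ := Finset.mem_erase.1 (Finset.mem_coe.1 hbm)
        exact ⟨b, Finset.mem_coe.2 hbm', hbk⟩
    rw [hunion]
    set S : Set ℕ := rho '' ((projL ((iF : ℕ) - 1) C : Finset α) : Set α)
      ∪ rho '' ((projR ((iF : ℕ) - 1) C : Finset β) : Set β) with hSdef
    have hcond : (1 : ℕ) ∈ {m | m + (rho (x iF) - 1) ∈ S} := by
      show 1 + (rho (x iF) - 1) ∈ S
      rw [show (1 : ℕ) + (rho (x iF) - 1) = rho (x iF) by omega, hSdef]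
      exact Or.inr hρS
    conv_lhs => rw [show n - 1 = (rho (x iF) - 1) + (n - rho (x iF)) by omega, uWord_append,
      show n - rho (x iF) = 1 + (n - rho (x iF) - 1) by omega, uWord_append, uWord_one,
      if_pos hcond]
    congr 1
    · apply uWord_congr
      intro k h1 h2
      rw [hSdef]
      constructor
      · rintro (h | h)
        · exact h
        · exact absurd (hboundR k h) (by omega)
      · exact Or.inl
    congr 1
    apply uWord_congr
    intro k h1 h2
    show ((k + 1) + (rho (x iF) - 1) ∈ S) ↔ _
    rw [show (k + 1) + (rho (x iF) - 1) = k + rho (x iF) by omega, hSdef]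
    constructor
    · rintro (h | h)
      · exact absurd (hboundL _ h) (by omega)
      · exact (heraseR k h1).1 h
    · intro h
      exact Or.inr ((heraseR k h1).2 h)

omit hgB hφ hbij hmono in
lemma upsSet_bot_eq (S : Set α) (m : ℕ) :
    upsSet K S (⊥ : α) m = ∑ d ∈ (Set.toFinite (chainsIn S (⊥ : α))).toFinset,
      uWord K m (rho '' (d : Set α)) := by
  unfold upsSet
  rw [finsum_mem_eq_finite_toFinset_sum _ (Set.toFinite _)]
  apply Finset.sum_congr rfl
  intro d _
  congr 1
  have h : (fun y : α => rho y - rho (⊥ : α)) = rho := by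
    funext y
    rw [rho_bot]
    omega
  rw [h]

omit hφ in
lemma upsSet_Ico_eq (iF : Fin (N + 1)) (hξtop : x iF ≠ ⊤) (m : ℕ) :
    upsSet K (Set.Ico (x iF) ⊤) (x iF) m
    = ∑ e ∈ (Set.toFinite {e : Finset β | (e : Set β) ⊆ Set.Ioo (x iF) ⊤ ∧
        IsChain (· ≤ ·) (e : Set β)}).toFinset,
      uWord K m {k | k + rho (x iF) ∈ rho '' (e : Set β)} := by
  unfold upsSet
  rw [finsum_mem_eq_finite_toFinset_sum _ (Set.toFinite _)]
  refine Finset.sum_bij' (fun C _ => C.erase (x iF)) (fun e _ => insert (x iF) e)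
    ?_ ?_ ?_ ?_ ?_
  · intro C hC
    rw [Set.Finite.mem_toFinset] at hC ⊢
    obtain ⟨hC1, hC2, hC3⟩ := hC
    constructor
    · intro z hz
      obtain ⟨hne, hz'⟩ := Finset.mem_erase.1 (Finset.mem_coe.1 hz)
      have h1 := hC1 (Finset.mem_coe.2 hz')
      exact ⟨lt_of_le_of_ne h1.1 (Ne.symm hne), h1.2⟩
    · exact isChain_anti (Finset.coe_subset.2 (Finset.erase_subset _ _)) hC2
  · intro e he
    rw [Set.Finite.mem_toFinset] at he ⊢
    obtain ⟨he1, he2⟩ := he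
    refine ⟨?_, ?_, Finset.mem_insert_self _ _⟩
    · intro z hz
      rw [Finset.coe_insert] at hz
      rcases hz with rfl | hz'
      · exact ⟨le_refl _, lt_top_iff_ne_top.2 hξtop⟩
      · exact ⟨(he1 hz').1.le, (he1 hz').2⟩
    · rw [Finset.coe_insert]
      exact he2.insert (fun b hb _ => Or.inl (he1 hb).1.le)
  · intro C hC
    rw [Set.Finite.mem_toFinset] at hC
    exact Finset.insert_erase hC.2.2
  · intro e he
    rw [Set.Finite.mem_toFinset] at he
    exact Finset.erase_insert (fun h => lt_irrefl _ (he.1 h).1)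
  · intro C hC
    rw [Set.Finite.mem_toFinset] at hC
    obtain ⟨hC1, hC2, hC3⟩ := hC
    apply uWord_congr
    intro k h1 h2
    constructor
    · rintro ⟨z, hz, hzk⟩
      have hzk' : rho z - rho (x iF) = k := hzk
      have hzC : z ∈ C := Finset.mem_coe.1 hz
      have hzne : z ≠ x iF := by
        intro h
        rw [h] at hzk'
        omega
      have hgt : x iF < z := lt_of_le_of_ne (hC1 hz).1 (Ne.symm hzne)
      have hrho : rho (x iF) < rho z := rho_lt_of_lt hgt
      refine ⟨z, Finset.mem_coe.2 (Finset.mem_erase.2 ⟨hzne, hzC⟩), ?_⟩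
      omega
    · rintro ⟨b, hbm, hbk⟩
      obtain ⟨hbne, hbm'⟩ := Finset.mem_erase.1 (Finset.mem_coe.1 hbm)
      refine ⟨b, Finset.mem_coe.2 hbm', ?_⟩
      show rho b - rho (x iF) = k
      omega

lemma chains_filter_not_eq (iF : Fin (N + 1)) :
    ((Set.toFinite (chainsIn (φ ⁻¹' Set.Iic (x iF)) (⊥ : α))).toFinset.filter
        (fun d => ¬ ∃ a ∈ d, φ a = x iF))
      = (Set.toFinite (chainsIn (φ ⁻¹' Set.Iio (x iF)) (⊥ : α))).toFinset := by
  ext d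
  rw [Finset.mem_filter, Set.Finite.mem_toFinset, Set.Finite.mem_toFinset]
  constructor
  · rintro ⟨⟨h1, h2, h3⟩, hno⟩
    push_neg at hno
    refine ⟨?_, h2, h3⟩
    intro a ha
    exact lt_of_le_of_ne (h1 ha) (hno a (Finset.mem_coe.1 ha))
  · rintro ⟨h1, h2, h3⟩
    refine ⟨⟨fun a ha => (h1 ha).le, h2, h3⟩, ?_⟩
    rintro ⟨a, ha, hak⟩
    exact absurd hak (h1 (Finset.mem_coe.2 ha)).ne

lemma uWord_last_a (iF : Fin (N + 1)) (hρ1 : 1 ≤ rho (x iF)) :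
    ∀ d ∈ (Set.toFinite (chainsIn (φ ⁻¹' Set.Iio (x iF)) (⊥ : α))).toFinset,
      uWord K (rho (x iF)) (rho '' (d : Set α))
        = uWord K (rho (x iF) - 1) (rho '' (d : Set α)) * la K := by
  intro d hd
  rw [Set.Finite.mem_toFinset] at hd
  obtain ⟨h1, h2, h3⟩ := hd
  rw [uWord_split_last K hρ1, if_neg]
  rintro ⟨a, ham, hak⟩
  have ha1 : rho a ≤ rho (φ a) := hφ.2.1 a
  have ha2 : rho (φ a) < rho (x iF) := rho_lt_of_lt (h1 ham)
  omega

end Assembly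

/-- Let `φ : Γ → B` be a strong formal subdivision of rank `0`, `Γ`
lower Eulerian, `B` Eulerian of rank `n`, `x_0, …, x_N` a listing of `B` with weakly
increasing ranks, with intermediate posets `B_i` and intermediate maps `φ_i`.  Then for
`0 < i < N`:
`ℓ^Υ_{Γ_{x_i}} · Υ_{[x_i, 1̂)}
  = ∑_{C chain of ∂B_i meeting φ_i⁻¹(x_i)} u_{ρ(C)} - ∑_{C chain of ∂B_{i-1} ∋ x_i} u_{ρ(C)}`,
where the local flag enumerator is `ℓ^Υ_P = Υ_P - Υ_{∂P}·(a + b)` (the image of the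
local `ab`-index `ℓ^Ψ_P = Ψ_P - Ψ_{∂P}·a` under `a ↦ a + b`, `b ↦ b`) and
`Γ_{x_i} = φ⁻¹[0̂, x_i]` has boundary `φ⁻¹[0̂, x_i)`. -/
theorem local_flag_enumerator_identity
    (K : Type) [Field K] [CharZero K]
    (α β : Type) [PartialOrder α] [Finite α] [OrderBot α]
    [PartialOrder β] [Finite β] [OrderBot β] [OrderTop β] (n N : ℕ)
    (hΓ : IsLowerEulerianOfRank α n) (hB : IsEulerianOfRank β n)
    (φ : α → β) (hφ : IsSFS φ)
    (x : Fin (N + 1) → β) (hbij : Function.Bijective x)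
    (hmono : ∀ i j : Fin (N + 1), i ≤ j → rho (x i) ≤ rho (x j)) :
    ∀ (i : ℕ) (_ : 0 < i) (hi2 : i < N) (xi : β),
      xi = x ⟨i, Nat.lt_succ_of_lt hi2⟩ →
      (upsSet K (φ ⁻¹' Set.Iic xi) ⊥ (rho xi)
          - upsSet K (φ ⁻¹' Set.Iio xi) ⊥ (rho xi - 1) * (la K + lb K))
        * upsSet K (Set.Ico xi ⊤) xi (n - rho xi - 1)
      = (∑ᶠ C ∈ {C ∈ chainsMin (boundary (InterPoset φ x i) n) |
            ∃ y : (φ ⁻¹' Iset x i),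
              (⟨.inl y⟩ : InterPoset φ x i) ∈ C ∧ φ (y : α) = xi},
          uWord K (n - 1) (rho '' (C : Set (InterPoset φ x i))))
        - ∑ᶠ C ∈ {C ∈ chainsMin (boundary (InterPoset φ x (i - 1)) n) |
            ∃ w : {v : β // v ∉ Iset x (i - 1)},
              (⟨.inr w⟩ : InterPoset φ x (i - 1)) ∈ C ∧ (w : β) = xi},
          uWord K (n - 1) (rho '' (C : Set (InterPoset φ x (i - 1)))) := by
  intro i hi1 hi2 xi hxi
  have hgB : IsGradedOfRank β n := hB.2.2.1
  subst hxi
  set iF : Fin (N + 1) := ⟨i, Nat.lt_succ_of_lt hi2⟩ with hiFdef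
  have hiv : (iF : ℕ) = i := rfl
  have hi1' : 1 ≤ (iF : ℕ) := by omega
  have hi2' : (iF : ℕ) < N := by omega
  have hn : 1 ≤ n := by
    have h0 : (0 : Fin (N + 1)) ≠ Fin.last N := by
      intro h
      have := congrArg Fin.val h
      simp at this
      omega
    have hne : (⊥ : β) ≠ ⊤ := by
      rw [← x_zero_eq_bot hgB hbij hmono, ← x_last_eq_top hgB hbij hmono]
      exact fun h => h0 (hbij.1 h)
    have h2 := rho_lt_of_lt (hne.lt_top)
    rw [rho_bot, rho_top_of_graded hgB] at h2
    omega
  have hρ1 : 1 ≤ rho (x iF) := by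
    by_contra hcon
    have h0 : rho (x iF) = 0 := by omega
    have hb : x iF = ⊥ := eq_bot_of_rho_eq_zero h0
    have h1 : x iF = x 0 := by rw [hb, x_zero_eq_bot hgB hbij hmono]
    have h2 := hbij.1 h1
    have := congrArg Fin.val h2
    simp [hiFdef] at this
    omega
  have hρn : rho (x iF) ≤ n - 1 :=
    rho_mem_Iset_le hgB hbij hmono hi2' hn (mem_Iset_self hgB hbij hmono iF)
  have hξtop : x iF ≠ ⊤ := by
    intro h
    rw [h, rho_top_of_graded hgB] at hρn
    omega
  rw [show i = (iF : ℕ) from rfl]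
  rw [sum1_eq K hgB hφ hbij hmono iF hi1' hi2' hn,
    sum2_eq K hgB hφ hbij hmono iF hi1' hi2' hn,
    upsSet_bot_eq K (φ ⁻¹' Set.Iic (x iF)) (rho (x iF)),
    upsSet_bot_eq K (φ ⁻¹' Set.Iio (x iF)) (rho (x iF) - 1),
    upsSet_Ico_eq K hgB hbij hmono iF hξtop (n - rho (x iF) - 1)]
  rw [← Finset.sum_filter_add_sum_filter_not
    ((Set.toFinite (chainsIn (φ ⁻¹' Set.Iic (x iF)) (⊥ : α))).toFinset)
    (fun d => ∃ a ∈ d, φ a = x iF) (fun d => uWord K (rho (x iF)) (rho '' (d : Set α)))]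
  rw [chains_filter_not_eq hgB hφ hbij hmono iF]
  rw [Finset.sum_congr rfl (uWord_last_a K hgB hφ hbij hmono iF hρ1), ← Finset.sum_mul]
  noncomm_ring

end CDIndex
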